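/- arXiv:2601.05892 — 2 statements merged into one kernel-verified Lean document; each statement's English description precedes it below -/
import Mathlib

section
/- Let s ∈ ℕ and let G and H be graphs on the same vertex set, each with minimum degree at least 3. Then for all k ≥ 1: if the 2k-dimensional Weisfeiler-Leman algorithm does not distinguish G^3 and H^3, then the k-dimensional Weisfeiler-Leman algorithm does not distinguish G^s and H^s. -/
/-- The edges of `G`, oriented according to the linear order on the vertices. -/
def SubEdges {V : Type} [LinearOrder V] (G : SimpleGraph V) : Type :=
  {p : V × V // p.1 < p.2 ∧ G.Adj p.1 p.2}

/-- The vertex set of the `s`-subdivision of `G`: the original vertices together with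
`s` new internal path vertices for each edge. -/
def SubdivVerts {V : Type} [LinearOrder V] (G : SimpleGraph V) (s : ℕ) : Type :=
  V ⊕ (SubEdges G × Fin s)

/-- The `s`-subdivision `G^s` of `G`: every edge of `G` is replaced by a path with `s`
new internal vertices (for `s = 0` this is `G` itself). -/
def subdivision {V : Type} [LinearOrder V] (G : SimpleGraph V) (s : ℕ) :
    SimpleGraph (SubdivVerts G s) :=
  SimpleGraph.fromRel (fun x y =>
    match x, y with
    | Sum.inl u, Sum.inl v => s = 0 ∧ G.Adj u v
    | Sum.inl u, Sum.inr (e, j) => (u = e.1.1 ∧ (j : ℕ) = 0) ∨ (u = e.1.2 ∧ (j : ℕ) = s - 1)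
    | Sum.inr (e, j), Sum.inr (e', j') => e = e' ∧ (j : ℕ) + 1 = (j' : ℕ)
    | Sum.inr _, Sum.inl _ => False)

/-- Tuples `v` in `G` and `w` in `H` have the same atomic type: they realize the same
equalities and the same adjacencies. -/
def atpEq {V W : Type} (G : SimpleGraph V) (H : SimpleGraph W) {m : ℕ}
    (v : Fin m → V) (w : Fin m → W) : Prop :=
  ∀ i j : Fin m, ((v i = v j) ↔ (w i = w j)) ∧ (G.Adj (v i) (v j) ↔ H.Adj (w i) (w j))

/-- `wlEq G H k r v w` : the `k`-tuples `v` (in `G`) and `w` (in `H`) receive the same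
color after `r` refinement rounds of the `k`-dimensional Weisfeiler-Leman algorithm. -/
def wlEq {V W : Type} (G : SimpleGraph V) (H : SimpleGraph W) (k : ℕ) :
    ℕ → (Fin k → V) → (Fin k → W) → Prop
  | 0 => fun v w => atpEq G H v w
  | (r + 1) => fun v w =>
      wlEq G H k r v w ∧
      ∃ b : V ≃ W, ∀ u : V,
        atpEq G H (Fin.snoc v u) (Fin.snoc w (b u)) ∧
        ∀ i : Fin k, wlEq G H k r (Function.update v i u) (Function.update w i (b u))

/-- `G` and `H` are not distinguished by the `k`-dimensional Weisfeiler-Leman algorithm: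
at every refinement round, every color has the same multiplicity among `k`-tuples of `G`
and of `H`, i.e. there is a color-preserving bijection between the tuple spaces. -/
def WLIndistinguishable {V W : Type} (G : SimpleGraph V) (H : SimpleGraph W) (k : ℕ) : Prop :=
  ∀ r : ℕ, ∃ F : (Fin k → V) ≃ (Fin k → W), ∀ v, wlEq G H k r v (F v)


section WLBasics

open Function

variable {α β γ : Type} {A : SimpleGraph α} {B : SimpleGraph β} {C : SimpleGraph γ} {k : ℕ}

lemma atpEq_refl {m : ℕ} (v : Fin m → α) : atpEq A A v v := fun _ _ => ⟨Iff.rfl, Iff.rfl⟩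

lemma atpEq_symm {m : ℕ} {v : Fin m → α} {w : Fin m → β} (h : atpEq A B v w) : atpEq B A w v :=
  fun i j => ⟨(h i j).1.symm, (h i j).2.symm⟩

lemma atpEq_trans {m : ℕ} {v : Fin m → α} {w : Fin m → β} {x : Fin m → γ}
    (h1 : atpEq A B v w) (h2 : atpEq B C w x) : atpEq A C v x :=
  fun i j => ⟨(h1 i j).1.trans (h2 i j).1, (h1 i j).2.trans (h2 i j).2⟩

lemma wlEq_succ {r : ℕ} {v : Fin k → α} {w : Fin k → β} :
    wlEq A B k (r+1) v w ↔ (wlEq A B k r v w ∧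
      ∃ b : α ≃ β, ∀ u : α,
        atpEq A B (Fin.snoc v u) (Fin.snoc w (b u)) ∧
        ∀ i : Fin k, wlEq A B k r (Function.update v i u) (Function.update w i (b u))) := by
  rw [wlEq]

lemma wlEq_zero {v : Fin k → α} {w : Fin k → β} :
    wlEq A B k 0 v w ↔ atpEq A B v w := by rw [wlEq]

lemma wlEq_atp {r : ℕ} {v : Fin k → α} {w : Fin k → β} (h : wlEq A B k r v w) :
    atpEq A B v w := by
  induction r with
  | zero => exact wlEq_zero.1 h
  | succ r ih => exact ih (wlEq_succ.1 h).1

lemma wlEq_of_succ {r : ℕ} {v : Fin k → α} {w : Fin k → β} (h : wlEq A B k (r+1) v w) :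
    wlEq A B k r v w := (wlEq_succ.1 h).1

lemma wlEq_mono {r r' : ℕ} (hr : r' ≤ r) {v : Fin k → α} {w : Fin k → β}
    (h : wlEq A B k r v w) : wlEq A B k r' v w := by
  induction r with
  | zero => simpa [Nat.le_zero.1 hr] using h
  | succ r ih =>
    rcases Nat.lt_or_ge r' (r+1) with h' | h'
    · exact ih (Nat.lt_succ_iff.1 h') (wlEq_of_succ h)
    · have : r' = r + 1 := le_antisymm hr h'
      simpa [this] using h

lemma wlEq_refl : ∀ (r : ℕ) (v : Fin k → α), wlEq A A k r v v := by
  intro r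
  induction r with
  | zero => exact fun v => wlEq_zero.2 (atpEq_refl v)
  | succ r ih =>
    intro v
    refine wlEq_succ.2 ⟨ih v, Equiv.refl α, fun u => ⟨atpEq_refl _, fun i => ih _⟩⟩

lemma wlEq_symm : ∀ {r : ℕ} {v : Fin k → α} {w : Fin k → β},
    wlEq A B k r v w → wlEq B A k r w v := by
  intro r
  induction r with
  | zero => exact fun h => wlEq_zero.2 (atpEq_symm (wlEq_zero.1 h))
  | succ r ih =>
    intro v w h
    obtain ⟨h0, b, hb⟩ := wlEq_succ.1 h
    refine wlEq_succ.2 ⟨ih h0, b.symm, fun u => ?_⟩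
    obtain ⟨h1, h2⟩ := hb (b.symm u)
    rw [b.apply_symm_apply] at h1 h2
    exact ⟨atpEq_symm h1, fun i => ih (h2 i)⟩

lemma wlEq_trans : ∀ {r : ℕ} {v : Fin k → α} {w : Fin k → β} {x : Fin k → γ},
    wlEq A B k r v w → wlEq B C k r w x → wlEq A C k r v x := by
  intro r
  induction r with
  | zero => exact fun h1 h2 => wlEq_zero.2 (atpEq_trans (wlEq_zero.1 h1) (wlEq_zero.1 h2))
  | succ r ih =>
    intro v w x h1 h2
    obtain ⟨h10, b1, hb1⟩ := wlEq_succ.1 h1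
    obtain ⟨h20, b2, hb2⟩ := wlEq_succ.1 h2
    refine wlEq_succ.2 ⟨ih h10 h20, b1.trans b2, fun u => ?_⟩
    obtain ⟨ha1, hr1⟩ := hb1 u
    obtain ⟨ha2, hr2⟩ := hb2 (b1 u)
    exact ⟨atpEq_trans ha1 ha2, fun i => ih (hr1 i) (hr2 i)⟩

/-- One step of extraction from `wlEq (r+1)`: a global bijection whose values relate
correctly to every pebble, with recursion. -/
lemma wlEq_step {r : ℕ} {v : Fin k → α} {w : Fin k → β} (h : wlEq A B k (r+1) v w) :
    ∃ b : α ≃ β, ∀ u : α,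
      (∀ ι : Fin k, (u = v ι ↔ b u = w ι) ∧ (A.Adj u (v ι) ↔ B.Adj (b u) (w ι))) ∧
      ∀ ι : Fin k, wlEq A B k r (Function.update v ι u) (Function.update w ι (b u)) := by
  obtain ⟨-, b, hb⟩ := wlEq_succ.1 h
  refine ⟨b, fun u => ⟨fun ι => ?_, (hb u).2⟩⟩
  have h1 := ((hb u).1 (Fin.last k) ι.castSucc).1
  have h2 := ((hb u).1 (Fin.last k) ι.castSucc).2
  simp only [Fin.snoc_last, Fin.snoc_castSucc] at h1 h2
  exact ⟨h1, h2⟩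

/-- Place a single vertex at slot ι. -/
lemma wlEq_place {r : ℕ} {v : Fin k → α} {w : Fin k → β} (h : wlEq A B k (r+1) v w)
    (u : α) (ι : Fin k) :
    ∃ z : β, (∀ κ : Fin k, (u = v κ ↔ z = w κ) ∧ (A.Adj u (v κ) ↔ B.Adj z (w κ))) ∧
      wlEq A B k r (Function.update v ι u) (Function.update w ι z) := by
  obtain ⟨b, hb⟩ := wlEq_step h
  exact ⟨b u, (hb u).1, (hb u).2 ι⟩

end WLBasics

set_option linter.unusedSectionVars false
section Subdiv

open Sum Function

variable {V : Type} [Fintype V] [LinearOrder V] {G : SimpleGraph V}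

instance : Finite (SubEdges G) := by unfold SubEdges; exact Subtype.finite
instance {s : ℕ} : Finite (SubdivVerts G s) := by
  unfold SubdivVerts
  infer_instance

@[simp] lemma sdv_inr_inj {s : ℕ} {a b : SubEdges G × Fin s} :
    (inr a : SubdivVerts G s) = inr b ↔ a = b := Sum.inr_injective.eq_iff

@[simp] lemma sdv_inl_inj {s : ℕ} {a b : V} :
    (inl a : SubdivVerts G s) = inl b ↔ a = b := Sum.inl_injective.eq_iff

@[simp] lemma sdv_inl_ne_inr {s : ℕ} {a : V} {b : SubEdges G × Fin s} :
    (inl a : SubdivVerts G s) ≠ inr b := Sum.inl_ne_inr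

@[simp] lemma sdv_inr_ne_inl {s : ℕ} {a : V} {b : SubEdges G × Fin s} :
    (inr b : SubdivVerts G s) ≠ inl a := Sum.inr_ne_inl

lemma sub_adj_inl_inl {s : ℕ} {x y : V} :
    (subdivision G s).Adj (inl x) (inl y) ↔ s = 0 ∧ G.Adj x y := by
  erw [subdivision, SimpleGraph.fromRel_adj]
  constructor
  · rintro ⟨-, h | h⟩
    · exact h
    · exact ⟨h.1, h.2.symm⟩
  · rintro ⟨hs, h⟩
    exact ⟨fun hc => h.ne (sdv_inl_inj.1 hc), Or.inl ⟨hs, h⟩⟩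

lemma sub_adj_inl_inr {s : ℕ} {x : V} {e : SubEdges G} {j : Fin s} :
    (subdivision G s).Adj (inl x) (inr (e, j)) ↔
      ((x = e.1.1 ∧ (j : ℕ) = 0) ∨ (x = e.1.2 ∧ (j : ℕ) = s - 1)) := by
  erw [subdivision, SimpleGraph.fromRel_adj]
  constructor
  · rintro ⟨-, h | h⟩
    · exact h
    · exact h.elim
  · intro h
    exact ⟨sdv_inl_ne_inr, Or.inl h⟩

lemma sub_adj_inr_inl {s : ℕ} {x : V} {e : SubEdges G} {j : Fin s} :
    (subdivision G s).Adj (inr (e, j)) (inl x) ↔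
      ((x = e.1.1 ∧ (j : ℕ) = 0) ∨ (x = e.1.2 ∧ (j : ℕ) = s - 1)) := by
  erw [(subdivision G s).adj_comm]; exact sub_adj_inl_inr

lemma sub_adj_inr_inr {s : ℕ} {e e' : SubEdges G} {j j' : Fin s} :
    (subdivision G s).Adj (inr (e, j)) (inr (e', j')) ↔
      e = e' ∧ ((j : ℕ) + 1 = (j' : ℕ) ∨ (j' : ℕ) + 1 = (j : ℕ)) := by
  erw [subdivision, SimpleGraph.fromRel_adj]
  constructor
  · rintro ⟨hne, h | h⟩
    · exact ⟨h.1, Or.inl h.2⟩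
    · exact ⟨h.1.symm, Or.inr h.2⟩
  · rintro ⟨rfl, h | h⟩
    · refine ⟨fun hc => ?_, Or.inl ⟨rfl, h⟩⟩
      erw [sdv_inr_inj, Prod.mk.injEq, Fin.ext_iff] at hc
      omega
    · refine ⟨fun hc => ?_, Or.inr ⟨rfl, h⟩⟩
      erw [sdv_inr_inj, Prod.mk.injEq, Fin.ext_iff] at hc
      omega

/-- The canonical oriented edge attached to an adjacency. -/
noncomputable def edgeOfAdj {x y : V} (h : G.Adj x y) : SubEdges G :=
  if h' : x < y then ⟨(x, y), h', h⟩
  else ⟨(y, x), lt_of_le_of_ne (not_lt.1 h') h.ne', h.symm⟩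

lemma edgeOfAdj_spec {x y : V} (h : G.Adj x y) :
    ((edgeOfAdj h).1.1 = x ∧ (edgeOfAdj h).1.2 = y) ∨
    ((edgeOfAdj h).1.1 = y ∧ (edgeOfAdj h).1.2 = x) := by
  unfold edgeOfAdj
  by_cases h' : x < y
  · exact Or.inl ⟨congrArg (fun e : SubEdges G => e.1.1) (dif_pos h'), congrArg (fun e : SubEdges G => e.1.2) (dif_pos h')⟩
  · exact Or.inr ⟨congrArg (fun e : SubEdges G => e.1.1) (dif_neg h'), congrArg (fun e : SubEdges G => e.1.2) (dif_neg h')⟩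

lemma SubEdges.adj (e : SubEdges G) : G.Adj e.1.1 e.1.2 := e.2.2
lemma SubEdges.ne (e : SubEdges G) : e.1.1 ≠ e.1.2 := e.2.2.ne

-- the three special vertices of a subdivided edge in the 3-subdivision
def d0 (e : SubEdges G) : SubdivVerts G 3 := inr (e, 0)
def d2 (e : SubEdges G) : SubdivVerts G 3 := inr (e, 2)
def md (e : SubEdges G) : SubdivVerts G 3 := inr (e, 1)

lemma d0_ne_d2 {e e' : SubEdges G} : d0 e ≠ d2 e' := by
  erw [d0, d2, Ne, sdv_inr_inj, Prod.mk.injEq, Fin.ext_iff]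
  omega
lemma d0_ne_md {e e' : SubEdges G} : d0 e ≠ md e' := by
  erw [d0, md, Ne, sdv_inr_inj, Prod.mk.injEq, Fin.ext_iff]
  omega
lemma d2_ne_md {e e' : SubEdges G} : d2 e ≠ md e' := by
  erw [d2, md, Ne, sdv_inr_inj, Prod.mk.injEq, Fin.ext_iff]
  omega
lemma md_inj {e e' : SubEdges G} : md e = md e' ↔ e = e' := by
  simp only [md]
  erw [sdv_inr_inj, Prod.mk.injEq]
  simp
lemma d0_inj {e e' : SubEdges G} : d0 e = d0 e' ↔ e = e' := by
  simp only [d0]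
  erw [sdv_inr_inj, Prod.mk.injEq]
  simp
lemma d2_inj {e e' : SubEdges G} : d2 e = d2 e' ↔ e = e' := by
  simp only [d2]
  erw [sdv_inr_inj, Prod.mk.injEq]
  simp

lemma adj3_d0 {e : SubEdges G} {y : SubdivVerts G 3} :
    (subdivision G 3).Adj (d0 e) y ↔ y = inl e.1.1 ∨ y = md e := by
  rcases y with z | ⟨e', q⟩
  · rw [d0, sub_adj_inr_inl]
    simp only [md, Fin.isValue]
    constructor
    · rintro (⟨rfl, -⟩ | ⟨rfl, h⟩)
      · exact Or.inl rfl
      · simp at h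
    · rintro (h | h)
      · exact Or.inl ⟨(sdv_inl_inj.1 h), rfl⟩
      · exact absurd h sdv_inl_ne_inr
  · rw [d0, sub_adj_inr_inr]
    constructor
    · rintro ⟨rfl, h | h⟩
      · right
        erw [md, sdv_inr_inj, Prod.mk.injEq, Fin.ext_iff]
        exact ⟨rfl, by omega⟩
      · simp at h
    · rintro (h | h)
      · exact absurd h sdv_inr_ne_inl
      · erw [md, sdv_inr_inj, Prod.mk.injEq, Fin.ext_iff] at h
        exact ⟨h.1.symm, Or.inl (by omega)⟩

lemma adj3_d2 {e : SubEdges G} {y : SubdivVerts G 3} :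
    (subdivision G 3).Adj (d2 e) y ↔ y = inl e.1.2 ∨ y = md e := by
  rcases y with z | ⟨e', q⟩
  · rw [d2, sub_adj_inr_inl]
    simp only [md, Fin.isValue]
    constructor
    · rintro (⟨rfl, h⟩ | ⟨rfl, -⟩)
      · simp at h
      · exact Or.inl rfl
    · rintro (h | h)
      · exact Or.inr ⟨(sdv_inl_inj.1 h), rfl⟩
      · exact absurd h sdv_inl_ne_inr
  · rw [d2, sub_adj_inr_inr]
    constructor
    · rintro ⟨rfl, h | h⟩
      · have := q.isLt; omega
      · right
        erw [md, sdv_inr_inj, Prod.mk.injEq, Fin.ext_iff]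
        exact ⟨rfl, by omega⟩
    · rintro (h | h)
      · exact absurd h sdv_inr_ne_inl
      · erw [md, sdv_inr_inj, Prod.mk.injEq, Fin.ext_iff] at h
        exact ⟨h.1.symm, Or.inr (by omega)⟩

lemma adj3_md {e : SubEdges G} {y : SubdivVerts G 3} :
    (subdivision G 3).Adj (md e) y ↔ y = d0 e ∨ y = d2 e := by
  rcases y with z | ⟨e', q⟩
  · rw [md, sub_adj_inr_inl]
    constructor
    · rintro (⟨rfl, h⟩ | ⟨rfl, h⟩) <;> simp at h
    · rintro (h | h)
      · exact absurd h (by simp [d0])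
      · exact absurd h (by simp [d2])
  · rw [md, sub_adj_inr_inr]
    constructor
    · rintro ⟨rfl, h | h⟩
      · right
        erw [d2, sdv_inr_inj, Prod.mk.injEq, Fin.ext_iff]
        exact ⟨rfl, by omega⟩
      · left
        erw [d0, sdv_inr_inj, Prod.mk.injEq, Fin.ext_iff]
        exact ⟨rfl, by omega⟩
    · rintro (h | h)
      · erw [d0, sdv_inr_inj, Prod.mk.injEq, Fin.ext_iff] at h
        exact ⟨h.1.symm, Or.inr (by omega)⟩
      · erw [d2, sdv_inr_inj, Prod.mk.injEq, Fin.ext_iff] at h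
        exact ⟨h.1.symm, Or.inl (by omega)⟩

lemma adj3_inl {x : V} {y : SubdivVerts G 3} :
    (subdivision G 3).Adj (inl x) y ↔
      ∃ e : SubEdges G, (y = d0 e ∧ x = e.1.1) ∨ (y = d2 e ∧ x = e.1.2) := by
  rcases y with z | ⟨e', q⟩
  · rw [sub_adj_inl_inl]
    simp only [show (3:ℕ) ≠ 0 by omega, false_and, false_iff]
    rintro ⟨e, (⟨h, -⟩ | ⟨h, -⟩)⟩
    · exact absurd h (by simp [d0])
    · exact absurd h (by simp [d2])
  · rw [sub_adj_inl_inr]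
    constructor
    · rintro (⟨rfl, hq⟩ | ⟨rfl, hq⟩)
      · refine ⟨e', Or.inl ⟨?_, rfl⟩⟩
        erw [d0, sdv_inr_inj, Prod.mk.injEq, Fin.ext_iff]
        exact ⟨rfl, by omega⟩
      · refine ⟨e', Or.inr ⟨?_, rfl⟩⟩
        erw [d2, sdv_inr_inj, Prod.mk.injEq, Fin.ext_iff]
        exact ⟨rfl, by omega⟩
    · rintro ⟨e, (⟨he, rfl⟩ | ⟨he, rfl⟩)⟩
      · erw [d0, sdv_inr_inj, Prod.mk.injEq, Fin.ext_iff] at he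
        left
        exact ⟨by rw [he.1], by omega⟩
      · erw [d2, sdv_inr_inj, Prod.mk.injEq, Fin.ext_iff] at he
        right
        exact ⟨by rw [he.1], by omega⟩

end Subdiv

section Classes

open Sum Function

/-- Neighborhood of a vertex. -/
def nbhd {χ : Type} (A : SimpleGraph χ) (x : χ) : Set χ := {y | A.Adj x y}

/-- "Big" vertex: degree at least 3. -/
def IsBig {χ : Type} (A : SimpleGraph χ) (x : χ) : Prop := 3 ≤ (nbhd A x).ncard

/-- Non-big vertex with a big neighbour. -/
def IsD {χ : Type} (A : SimpleGraph χ) (x : χ) : Prop :=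
  ¬ IsBig A x ∧ ∃ y, A.Adj x y ∧ IsBig A y

/-- Non-big vertex without a big neighbour. -/
def IsM {χ : Type} (A : SimpleGraph χ) (x : χ) : Prop :=
  ¬ IsBig A x ∧ ¬ ∃ y, A.Adj x y ∧ IsBig A y

lemma ncard_nbhd_eq_of_bij {χ χ' : Type} {A : SimpleGraph χ} {B : SimpleGraph χ'}
    (b : χ ≃ χ') {x : χ} {x' : χ'} (hb : ∀ t, A.Adj x t ↔ B.Adj x' (b t)) :
    (nbhd A x).ncard = (nbhd B x').ncard := by
  have h : nbhd B x' = b '' nbhd A x := by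
    ext y
    constructor
    · intro hy
      exact ⟨b.symm y, by rw [nbhd, Set.mem_setOf_eq, hb (b.symm y), b.apply_symm_apply]; exact hy,
        b.apply_symm_apply y⟩
    · rintro ⟨t, ht, rfl⟩
      exact (hb t).1 ht
  rw [h, Set.ncard_image_of_injective _ b.injective]

lemma isBig_congr {χ χ' : Type} {A : SimpleGraph χ} {B : SimpleGraph χ'}
    (b : χ ≃ χ') {x : χ} {x' : χ'} (hb : ∀ t, A.Adj x t ↔ B.Adj x' (b t)) :
    IsBig A x ↔ IsBig B x' := by
  rw [IsBig, IsBig, ncard_nbhd_eq_of_bij b hb]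

lemma fin3_eq (q : Fin 3) : q = 0 ∨ q = 1 ∨ q = 2 := by fin_cases q <;> simp

variable {V : Type} [Fintype V] [LinearOrder V] {G : SimpleGraph V}

lemma nbhd_d0 (e : SubEdges G) : nbhd (subdivision G 3) (d0 e) = {inl e.1.1, md e} := by
  ext y
  rw [nbhd, Set.mem_setOf_eq, adj3_d0]
  exact Iff.rfl

lemma nbhd_d2 (e : SubEdges G) : nbhd (subdivision G 3) (d2 e) = {inl e.1.2, md e} := by
  ext y
  rw [nbhd, Set.mem_setOf_eq, adj3_d2]
  exact Iff.rfl

lemma nbhd_md (e : SubEdges G) : nbhd (subdivision G 3) (md e) = {d0 e, d2 e} := by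
  ext y
  rw [nbhd, Set.mem_setOf_eq, adj3_md]
  simp [Set.mem_insert_iff]

lemma not_big_d0 (e : SubEdges G) : ¬ IsBig (subdivision G 3) (d0 e) := by
  rw [IsBig, nbhd_d0]
  have := Set.ncard_insert_le (inl e.1.1 : SubdivVerts G 3) {md e}
  have h2 : ({md e} : Set (SubdivVerts G 3)).ncard = 1 := Set.ncard_singleton _
  intro hc; have := hc.trans this; erw [h2] at this; omega

lemma not_big_d2 (e : SubEdges G) : ¬ IsBig (subdivision G 3) (d2 e) := by
  rw [IsBig, nbhd_d2]
  have := Set.ncard_insert_le (inl e.1.2 : SubdivVerts G 3) {md e}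
  have h2 : ({md e} : Set (SubdivVerts G 3)).ncard = 1 := Set.ncard_singleton _
  intro hc; have := hc.trans this; erw [h2] at this; omega

lemma not_big_md (e : SubEdges G) : ¬ IsBig (subdivision G 3) (md e) := by
  rw [IsBig, nbhd_md]
  have := Set.ncard_insert_le (d0 e) ({d2 e} : Set (SubdivVerts G 3))
  have h2 : ({d2 e} : Set (SubdivVerts G 3)).ncard = 1 := Set.ncard_singleton _
  omega

variable (hd : ∀ v : V, 3 ≤ Set.ncard {w : V | G.Adj v w})

include hd in
lemma big_inl (x : V) : IsBig (subdivision G 3) (inl x) := by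
  classical
  set F : V → SubdivVerts G 3 := fun w =>
    if h : G.Adj x w then
      (if h2 : x < w then d0 ⟨(x, w), h2, h⟩
       else d2 ⟨(w, x), lt_of_le_of_ne (not_lt.1 h2) h.ne', h.symm⟩)
    else inl x with hF
  have hmaps : ∀ w ∈ {w : V | G.Adj x w}, F w ∈ nbhd (subdivision G 3) (inl x) := by
    intro w hw
    rw [Set.mem_setOf_eq] at hw
    show (subdivision G 3).Adj (inl x) (F w)
    rw [hF]
    simp only [hw, dif_pos]
    erw [dif_pos hw]; split_ifs with h2
    · next =>
      exact ((adj3_d0 (e := ⟨(x, w), h2, hw⟩)).2 (Or.inl rfl)).symm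
    · next =>
      exact ((adj3_d2 (e := ⟨(w, x), lt_of_le_of_ne (not_lt.1 h2) hw.ne', hw.symm⟩)).2
        (Or.inl rfl)).symm
  have hinj : Set.InjOn F {w : V | G.Adj x w} := by
    intro w hw w' hw' heq
    rw [Set.mem_setOf_eq] at hw hw'
    rw [hF] at heq
    simp only [hw, hw', dif_pos] at heq
    by_cases h1 : x < w <;> by_cases h2 : x < w'
    · erw [dif_pos hw, dif_pos hw', dif_pos h1, dif_pos h2, d0_inj, Subtype.mk.injEq, Prod.mk.injEq] at heq
      exact heq.2
    · erw [dif_pos hw, dif_pos hw', dif_pos h1, dif_neg h2] at heq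
      exact absurd heq d0_ne_d2
    · erw [dif_pos hw, dif_pos hw', dif_neg h1, dif_pos h2] at heq
      exact absurd heq.symm d0_ne_d2
    · erw [dif_pos hw, dif_pos hw', dif_neg h1, dif_neg h2, d2_inj, Subtype.mk.injEq, Prod.mk.injEq] at heq
      exact heq.1
  calc 3 ≤ Set.ncard {w : V | G.Adj x w} := hd x
    _ = (F '' {w : V | G.Adj x w}).ncard := (Set.ncard_image_of_injOn hinj).symm
    _ ≤ (nbhd (subdivision G 3) (inl x)).ncard := by
        refine Set.ncard_le_ncard ?_ (Set.toFinite _)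
        rintro y ⟨w, hw, rfl⟩
        exact hmaps w hw

include hd in
lemma isBig_iff {x : SubdivVerts G 3} : IsBig (subdivision G 3) x ↔ ∃ v, x = inl v := by
  constructor
  · intro hx
    rcases x with v | ⟨e, q⟩
    · exact ⟨v, rfl⟩
    · exfalso
      have hq := fin3_eq q
      rcases hq with rfl | rfl | rfl
      · exact not_big_d0 e hx
      · exact not_big_md e hx
      · exact not_big_d2 e hx
  · rintro ⟨v, rfl⟩
    exact big_inl hd v

include hd in
lemma isD_iff {x : SubdivVerts G 3} :
    IsD (subdivision G 3) x ↔ ∃ e, x = d0 e ∨ x = d2 e := by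
  constructor
  · rintro ⟨hnb, y, hxy, hy⟩
    rcases (isBig_iff hd).1 hy with ⟨v, rfl⟩
    rcases x with w | ⟨e, q⟩
    · exact absurd (big_inl hd w) hnb
    · rw [sub_adj_inr_inl] at hxy
      rcases hxy with ⟨-, hq⟩ | ⟨-, hq⟩
      · refine ⟨e, Or.inl ?_⟩
        erw [d0, sdv_inr_inj, Prod.mk.injEq, Fin.ext_iff]
        exact ⟨rfl, by omega⟩
      · refine ⟨e, Or.inr ?_⟩
        erw [d2, sdv_inr_inj, Prod.mk.injEq, Fin.ext_iff]
        exact ⟨rfl, by omega⟩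
  · rintro ⟨e, rfl | rfl⟩
    · exact ⟨not_big_d0 e, inl e.1.1, adj3_d0.2 (Or.inl rfl), big_inl hd _⟩
    · exact ⟨not_big_d2 e, inl e.1.2, adj3_d2.2 (Or.inl rfl), big_inl hd _⟩

include hd in
lemma isM_iff {x : SubdivVerts G 3} :
    IsM (subdivision G 3) x ↔ ∃ e, x = md e := by
  constructor
  · rintro ⟨hnb, hno⟩
    rcases x with w | ⟨e, q⟩
    · exact absurd (big_inl hd w) hnb
    · have hq := fin3_eq q
      rcases hq with rfl | rfl | rfl
      · exact absurd ⟨inl e.1.1, adj3_d0.2 (Or.inl rfl), big_inl hd _⟩ hno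
      · exact ⟨e, rfl⟩
      · exact absurd ⟨inl e.1.2, adj3_d2.2 (Or.inl rfl), big_inl hd _⟩ hno
  · rintro ⟨e, rfl⟩
    refine ⟨not_big_md e, ?_⟩
    rintro ⟨y, hy, hby⟩
    rw [adj3_md] at hy
    rcases hy with rfl | rfl
    · exact not_big_d0 e hby
    · exact not_big_d2 e hby

include hd in
/-- every vertex of the 3-subdivision is big, a dart, or a middle -/
lemma cls3_trichotomy (x : SubdivVerts G 3) :
    (∃ v, x = inl v) ∨ (∃ e, x = d0 e ∨ x = d2 e) ∨ (∃ e, x = md e) := by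
  rcases x with v | ⟨e, q⟩
  · exact Or.inl ⟨v, rfl⟩
  · have hq := fin3_eq q
    rcases hq with rfl | rfl | rfl
    · exact Or.inr (Or.inl ⟨e, Or.inl rfl⟩)
    · exact Or.inr (Or.inr ⟨e, rfl⟩)
    · exact Or.inr (Or.inl ⟨e, Or.inr rfl⟩)

end Classes

section Trans3

open Sum Function

variable {V : Type} [Fintype V] [LinearOrder V] {G H : SimpleGraph V} {K : ℕ}

/-- Transfer of `IsBig` for pebbled vertices (one round). -/
lemma pebbled_big {r : ℕ} {va : Fin K → SubdivVerts G 3} {wb : Fin K → SubdivVerts H 3}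
    (h : wlEq (subdivision G 3) (subdivision H 3) K (r+1) va wb) (ι : Fin K) :
    IsBig (subdivision G 3) (va ι) ↔ IsBig (subdivision H 3) (wb ι) := by
  obtain ⟨b, hb⟩ := wlEq_step h
  refine isBig_congr b (fun t => ?_)
  rw [(subdivision G 3).adj_comm, (subdivision H 3).adj_comm]
  exact ((hb t).1 ι).2

variable (hdG : ∀ v : V, 3 ≤ Set.ncard {w : V | G.Adj v w})
variable (hdH : ∀ v : V, 3 ≤ Set.ncard {w : V | H.Adj v w})

include hdG hdH in
lemma pebbled_inl {r : ℕ} {va : Fin K → SubdivVerts G 3} {wb : Fin K → SubdivVerts H 3}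
    (h : wlEq (subdivision G 3) (subdivision H 3) K (r+1) va wb) (ι : Fin K) :
    (∃ x, va ι = inl x) ↔ (∃ y, wb ι = inl y) := by
  rw [← isBig_iff hdG, ← isBig_iff hdH]
  exact pebbled_big h ι

section StepData

variable {r : ℕ} {va : Fin K → SubdivVerts G 3} {wb : Fin K → SubdivVerts H 3}
  {b : SubdivVerts G 3 ≃ SubdivVerts H 3}
  (hbeq : ∀ (u : SubdivVerts G 3) (ι : Fin K), (u = va ι ↔ b u = wb ι))
  (hbadj : ∀ (u : SubdivVerts G 3) (ι : Fin K),
    ((subdivision G 3).Adj u (va ι) ↔ (subdivision H 3).Adj (b u) (wb ι)))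
  (hbrec : ∀ (u : SubdivVerts G 3) (ι : Fin K),
    wlEq (subdivision G 3) (subdivision H 3) K r
      (Function.update va ι u) (Function.update wb ι (b u)))
  (hK : 0 < K)

include hbrec hK in
lemma val_big {r' : ℕ} (hr : r = r' + 1) (u : SubdivVerts G 3) :
    IsBig (subdivision G 3) u ↔ IsBig (subdivision H 3) (b u) := by
  subst hr
  have h := pebbled_big (hbrec u ⟨0, hK⟩) ⟨0, hK⟩
  rwa [Function.update_self, Function.update_self] at h

include hbrec hK hdG hdH in
lemma val_inl {r' : ℕ} (hr : r = r' + 1) (u : SubdivVerts G 3) :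
    (∃ x, u = inl x) ↔ (∃ y, b u = inl y) := by
  rw [← isBig_iff hdG, ← isBig_iff hdH]
  exact val_big hbrec hK hr u

end StepData

/-- forward transfer of existence of a big neighbour, for pebbled vertices -/
lemma pebbled_bignbr_fwd {r : ℕ} {va : Fin K → SubdivVerts G 3} {wb : Fin K → SubdivVerts H 3}
    (h : wlEq (subdivision G 3) (subdivision H 3) K (r+2) va wb) (hK : 0 < K) (ι : Fin K) :
    (∃ y, (subdivision G 3).Adj (va ι) y ∧ IsBig (subdivision G 3) y) →
    (∃ z, (subdivision H 3).Adj (wb ι) z ∧ IsBig (subdivision H 3) z) := by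
  rintro ⟨y, hy, hby⟩
  obtain ⟨b, hb⟩ := wlEq_step h
  refine ⟨b y, ?_, ?_⟩
  · rw [(subdivision H 3).adj_comm]
    exact ((hb y).1 ι).2.1 (by rwa [(subdivision G 3).adj_comm] at hy)
  · exact (val_big (fun u κ => (hb u).2 κ) hK rfl y).1 hby

include hdG hdH in
lemma pebbled_drt {r : ℕ} {va : Fin K → SubdivVerts G 3} {wb : Fin K → SubdivVerts H 3}
    (h : wlEq (subdivision G 3) (subdivision H 3) K (r+2) va wb) (hK : 0 < K) (ι : Fin K) :
    IsD (subdivision G 3) (va ι) ↔ IsD (subdivision H 3) (wb ι) := by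
  have hbig := pebbled_big (wlEq_of_succ h) ι
  constructor
  · rintro ⟨h1, h2⟩
    exact ⟨fun hc => h1 (hbig.2 hc), pebbled_bignbr_fwd h hK ι h2⟩
  · rintro ⟨h1, h2⟩
    exact ⟨fun hc => h1 (hbig.1 hc), pebbled_bignbr_fwd (wlEq_symm h) hK ι h2⟩

include hdG hdH in
lemma pebbled_mid {r : ℕ} {va : Fin K → SubdivVerts G 3} {wb : Fin K → SubdivVerts H 3}
    (h : wlEq (subdivision G 3) (subdivision H 3) K (r+2) va wb) (hK : 0 < K) (ι : Fin K) :
    IsM (subdivision G 3) (va ι) ↔ IsM (subdivision H 3) (wb ι) := by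
  have hbig := pebbled_big (wlEq_of_succ h) ι
  constructor
  · rintro ⟨h1, h2⟩
    exact ⟨fun hc => h1 (hbig.2 hc), fun hc => h2 (pebbled_bignbr_fwd (wlEq_symm h) hK ι hc)⟩
  · rintro ⟨h1, h2⟩
    exact ⟨fun hc => h1 (hbig.1 hc), fun hc => h2 (pebbled_bignbr_fwd h hK ι hc)⟩

section StepData2

variable {r : ℕ} {va : Fin K → SubdivVerts G 3} {wb : Fin K → SubdivVerts H 3}
  {b : SubdivVerts G 3 ≃ SubdivVerts H 3}
  (hbeq : ∀ (u : SubdivVerts G 3) (ι : Fin K), (u = va ι ↔ b u = wb ι))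
  (hbadj : ∀ (u : SubdivVerts G 3) (ι : Fin K),
    ((subdivision G 3).Adj u (va ι) ↔ (subdivision H 3).Adj (b u) (wb ι)))
  (hbrec : ∀ (u : SubdivVerts G 3) (ι : Fin K),
    wlEq (subdivision G 3) (subdivision H 3) K r
      (Function.update va ι u) (Function.update wb ι (b u)))
  (hK : 0 < K)

include hbrec hK hdG hdH in
lemma val_drt {r' : ℕ} (hr : r = r' + 2) (u : SubdivVerts G 3) :
    IsD (subdivision G 3) u ↔ IsD (subdivision H 3) (b u) := by
  subst hr
  have h := pebbled_drt hdG hdH (hbrec u ⟨0, hK⟩) hK ⟨0, hK⟩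
  rwa [Function.update_self, Function.update_self] at h

include hbrec hK hdG hdH in
lemma val_mid {r' : ℕ} (hr : r = r' + 2) (u : SubdivVerts G 3) :
    IsM (subdivision G 3) u ↔ IsM (subdivision H 3) (b u) := by
  subst hr
  have h := pebbled_mid hdG hdH (hbrec u ⟨0, hK⟩) hK ⟨0, hK⟩
  rwa [Function.update_self, Function.update_self] at h

include hbrec hK hdG hdH in
/-- the image of a middle is a middle -/
lemma val_mid' {r' : ℕ} (hr : r = r' + 2) (e : SubEdges G) :
    ∃ g : SubEdges H, b (md e) = md g := by
  rw [← isM_iff hdH]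
  exact (val_mid hdG hdH hbrec hK hr (md e)).1 ((isM_iff hdG).2 ⟨e, rfl⟩)

include hbrec hK hdG hdH in
/-- the image of a dart is a dart -/
lemma val_drt' {r' : ℕ} (hr : r = r' + 2) {u : SubdivVerts G 3} {e : SubEdges G}
    (hu : u = d0 e ∨ u = d2 e) :
    ∃ g : SubEdges H, b u = d0 g ∨ b u = d2 g := by
  rw [← isD_iff hdH]
  exact (val_drt hdG hdH hbrec hK hr u).1 ((isD_iff hdG).2 ⟨e, hu⟩)

include hbadj hbrec hK hdG hdH in
/-- Pin: the image of the middle of the edge of a pebbled dart is the middle of the edge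
of the image dart. -/
lemma pin_mid {r' : ℕ} (hr : r = r' + 2) {e : SubEdges G} {g : SubEdges H} {ι : Fin K}
    (hv : va ι = d0 e ∨ va ι = d2 e) (hw : wb ι = d0 g ∨ wb ι = d2 g) :
    b (md e) = md g := by
  obtain ⟨g', hg'⟩ := val_mid' hdG hdH hbrec hK hr e
  have hadj : (subdivision H 3).Adj (b (md e)) (wb ι) := by
    refine (hbadj (md e) ι).1 ?_
    rcases hv with hv | hv <;> rw [hv]
    · exact (adj3_d0.2 (Or.inr rfl)).symm
    · exact (adj3_d2.2 (Or.inr rfl)).symm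
  rw [hg'] at hadj ⊢
  rcases hw with hw | hw <;> rw [hw] at hadj
  · rw [(subdivision H 3).adj_comm, adj3_d0] at hadj
    rcases hadj with hc | hc
    · exact absurd hc (by simp [md])
    · rw [md_inj] at hc
      rw [hc]
  · rw [(subdivision H 3).adj_comm, adj3_d2] at hadj
    rcases hadj with hc | hc
    · exact absurd hc (by simp [md])
    · rw [md_inj] at hc
      rw [hc]

include hbadj hbrec hK hdG hdH in
/-- Pin: the image of a dart of the edge of a pebbled middle is a dart of the image edge. -/
lemma pin_drt {r' : ℕ} (hr : r = r' + 2) {e : SubEdges G} {g : SubEdges H} {ι : Fin K}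
    {u : SubdivVerts G 3} (hu : u = d0 e ∨ u = d2 e)
    (hv : va ι = md e) (hw : wb ι = md g) :
    b u = d0 g ∨ b u = d2 g := by
  obtain ⟨g', hg'⟩ := val_drt' hdG hdH hbrec hK hr hu
  have hadj : (subdivision H 3).Adj (b u) (wb ι) := by
    refine (hbadj u ι).1 ?_
    rcases hu with hu | hu <;> rw [hu, hv]
    · exact adj3_d0.2 (Or.inr rfl)
    · exact adj3_d2.2 (Or.inr rfl)
  rw [hw, (subdivision H 3).adj_comm, adj3_md] at hadj
  exact hadj

end StepData2

end Trans3

section Coding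

open Sum Function

variable {V : Type} [Fintype V] [LinearOrder V] {G : SimpleGraph V} {s : ℕ}

/-- The code of a vertex of the `s`-subdivision in the `3`-subdivision:
original vertices map to themselves, internal vertices to the near dart of their edge
(or the middle vertex, for the exactly-central internal vertex). -/
def codeOf : SubdivVerts G s → SubdivVerts G 3
  | inl x => inl x
  | inr (e, j) => if 2*(j:ℕ)+1 < s then d0 e else if 2*(j:ℕ)+1 = s then md e else d2 e

/-- Distance of a vertex from the nearer end of its subdivided edge. -/
def tOf : SubdivVerts G s → ℕ
  | inl _ => 0
  | inr (_, j) => min (j:ℕ) (s-1-(j:ℕ))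

lemma codeOf_inl (x : V) :
    codeOf (inl x : SubdivVerts G s) = (inl x : SubdivVerts G 3) := rfl
@[simp] lemma tOf_inl (x : V) : tOf (s := s) (inl x : SubdivVerts G s) = 0 := rfl

lemma codeOf_internal (e : SubEdges G) (j : Fin s) :
    (codeOf (inr (e, j)) = d0 e ∧ tOf (inr (e, j) : SubdivVerts G s) = (j:ℕ) ∧ 2*(j:ℕ)+1 < s) ∨
    (codeOf (inr (e, j)) = md e ∧ tOf (inr (e, j) : SubdivVerts G s) = (j:ℕ) ∧ 2*(j:ℕ)+1 = s) ∨
    (codeOf (inr (e, j)) = d2 e ∧ tOf (inr (e, j) : SubdivVerts G s) = s-1-(j:ℕ) ∧ s < 2*(j:ℕ)+1) := by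
  have hj := j.isLt
  rw [codeOf, tOf]
  rcases lt_trichotomy (2*(j:ℕ)+1) s with h | h | h
  · exact Or.inl ⟨if_pos h, by omega, h⟩
  · exact Or.inr (Or.inl ⟨by rw [if_neg (by omega), if_pos h], by omega, h⟩)
  · exact Or.inr (Or.inr ⟨by rw [if_neg (by omega), if_neg (by omega)], by omega, h⟩)

lemma tie_iff (e : SubEdges G) (j : Fin s) :
    codeOf (inr (e, j)) = md e ↔ 2 * tOf (inr (e, j) : SubdivVerts G s) + 1 = s := by
  rcases codeOf_internal e j with ⟨h1, h2, h3⟩ | ⟨h1, h2, h3⟩ | ⟨h1, h2, h3⟩ <;> rw [h1, h2]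
  · constructor
    · intro hc; exact absurd hc d0_ne_md
    · intro hc; omega
  · simp [h3]
  · have hj := j.isLt
    constructor
    · intro hc; exact absurd hc d2_ne_md
    · intro hc; omega

lemma codeOf_cases (e : SubEdges G) (j : Fin s) :
    codeOf (inr (e, j)) = d0 e ∨ codeOf (inr (e, j)) = md e ∨ codeOf (inr (e, j)) = d2 e := by
  rcases codeOf_internal e j with ⟨h, -⟩ | ⟨h, -⟩ | ⟨h, -⟩
  · exact Or.inl h
  · exact Or.inr (Or.inl h)
  · exact Or.inr (Or.inr h)

lemma tOf_le (e : SubEdges G) (j : Fin s) :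
    2 * tOf (inr (e, j) : SubdivVerts G s) + 1 ≤ s := by
  have hj := j.isLt
  rw [tOf]
  omega

/-- code and t determine the vertex. -/
lemma code_t_inj {u p : SubdivVerts G s} (hc : codeOf u = codeOf p) (ht : tOf u = tOf p) :
    u = p := by
  rcases u with x | ⟨e, j⟩ <;> rcases p with x' | ⟨e', j'⟩
  · erw [codeOf_inl, codeOf_inl, sdv_inl_inj] at hc
    rw [hc]
  · rcases codeOf_cases e' j' with h | h | h <;>
      exact absurd ((codeOf_inl x ▸ hc).trans h) sdv_inl_ne_inr
  · rcases codeOf_cases e j with h | h | h <;>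
      exact absurd (h.symm.trans (hc.trans (codeOf_inl x'))) sdv_inr_ne_inl
  · have hj := j.isLt
    have hj' := j'.isLt
    rcases codeOf_internal e j with ⟨h1, h2, h3⟩ | ⟨h1, h2, h3⟩ | ⟨h1, h2, h3⟩ <;>
      rcases codeOf_internal e' j' with ⟨g1, g2, g3⟩ | ⟨g1, g2, g3⟩ | ⟨g1, g2, g3⟩ <;>
      rw [h1, g1] at hc <;> rw [h2, g2] at ht
    · rw [d0_inj] at hc
      subst hc
      erw [sdv_inr_inj, Prod.mk.injEq, Fin.ext_iff]
      exact ⟨rfl, by omega⟩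
    · exact absurd hc d0_ne_md
    · exact absurd hc d0_ne_d2
    · exact absurd hc.symm d0_ne_md
    · rw [md_inj] at hc
      subst hc
      erw [sdv_inr_inj, Prod.mk.injEq, Fin.ext_iff]
      exact ⟨rfl, by omega⟩
    · exact absurd hc.symm d2_ne_md
    · exact absurd hc.symm d0_ne_d2
    · exact absurd hc d2_ne_md
    · rw [d2_inj] at hc
      subst hc
      erw [sdv_inr_inj, Prod.mk.injEq, Fin.ext_iff]
      exact ⟨rfl, by omega⟩

lemma eq_iff_code_t {u p : SubdivVerts G s} :
    u = p ↔ (codeOf u = codeOf p ∧ tOf u = tOf p) :=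
  ⟨fun h => by rw [h]; exact ⟨rfl, rfl⟩, fun h => code_t_inj h.1 h.2⟩

/-- two vertices of a 3-subdivision lie on a common subdivided edge -/
def SameEdge {χ : Type} (A : SimpleGraph χ) (z z' : χ) : Prop :=
  z = z' ∨ A.Adj z z' ∨ ∃ m, IsM A m ∧ A.Adj z m ∧ A.Adj z' m

lemma sameEdge_symm {χ : Type} {A : SimpleGraph χ} {z z' : χ} (h : SameEdge A z z') :
    SameEdge A z' z := by
  rcases h with h | h | ⟨m, h1, h2, h3⟩
  · exact Or.inl h.symm
  · exact Or.inr (Or.inl h.symm)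
  · exact Or.inr (Or.inr ⟨m, h1, h3, h2⟩)

variable (hd : ∀ v : V, 3 ≤ Set.ncard {w : V | G.Adj v w})

include hd in
lemma sameEdge_iff {e e₂ : SubEdges G} {z z₂ : SubdivVerts G 3}
    (hz : z = d0 e ∨ z = md e ∨ z = d2 e) (hz₂ : z₂ = d0 e₂ ∨ z₂ = md e₂ ∨ z₂ = d2 e₂) :
    SameEdge (subdivision G 3) z z₂ ↔ e = e₂ := by
  have hze : ∃ q, z = inr (e, q) := by
    rcases hz with h | h | h <;> exact ⟨_, h⟩
  have hz₂e : ∃ q, z₂ = inr (e₂, q) := by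
    rcases hz₂ with h | h | h <;> exact ⟨_, h⟩
  obtain ⟨q, rfl⟩ := hze
  obtain ⟨q₂, rfl⟩ := hz₂e
  constructor
  · rintro (h | h | ⟨m, hm, h1, h2⟩)
    · erw [sdv_inr_inj, Prod.mk.injEq] at h
      exact h.1
    · exact (sub_adj_inr_inr.1 h).1
    · obtain ⟨f, rfl⟩ := (isM_iff hd).1 hm
      rw [md] at h1 h2
      exact (sub_adj_inr_inr.1 h1).1.trans (sub_adj_inr_inr.1 h2).1.symm
  · rintro rfl
    -- same edge: case on the two codes
    rcases hz with h | h | h <;> rcases hz₂ with h₂ | h₂ | h₂ <;> rw [h, h₂]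
    · exact Or.inl rfl
    · exact Or.inr (Or.inl (by rw [d0, md, sub_adj_inr_inr]; exact ⟨rfl, by omega⟩))
    · exact Or.inr (Or.inr ⟨md e, (isM_iff hd).2 ⟨e, rfl⟩,
        by rw [d0, md, sub_adj_inr_inr]; exact ⟨rfl, by omega⟩,
        by rw [d2, md, sub_adj_inr_inr]; exact ⟨rfl, by omega⟩⟩)
    · exact Or.inr (Or.inl (by rw [md, d0, sub_adj_inr_inr]; exact ⟨rfl, by omega⟩))
    · exact Or.inl rfl
    · exact Or.inr (Or.inl (by rw [md, d2, sub_adj_inr_inr]; exact ⟨rfl, by omega⟩))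
    · exact Or.inr (Or.inr ⟨md e, (isM_iff hd).2 ⟨e, rfl⟩,
        by rw [d2, md, sub_adj_inr_inr]; exact ⟨rfl, by omega⟩,
        by rw [d0, md, sub_adj_inr_inr]; exact ⟨rfl, by omega⟩⟩)
    · exact Or.inr (Or.inl (by rw [d2, md, sub_adj_inr_inr]; exact ⟨rfl, by omega⟩))
    · exact Or.inl rfl

/-- endpoint membership expressed through the middle code -/
lemma endpoint_iff {x : V} {e : SubEdges G} :
    (x = e.1.1 ∨ x = e.1.2) ↔
      ∃ z, (subdivision G 3).Adj (inl x) z ∧ (subdivision G 3).Adj z (md e) := by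
  constructor
  · rintro (rfl | rfl)
    · exact ⟨d0 e, (adj3_d0.2 (Or.inl rfl)).symm, adj3_d0.2 (Or.inr rfl)⟩
    · exact ⟨d2 e, (adj3_d2.2 (Or.inl rfl)).symm, adj3_d2.2 (Or.inr rfl)⟩
  · rintro ⟨z, h1, h2⟩
    rw [adj3_inl] at h1
    obtain ⟨f, ⟨rfl, hx⟩ | ⟨rfl, hx⟩⟩ := h1
    · rw [d0, md, sub_adj_inr_inr] at h2
      rw [h2.1] at hx
      exact Or.inl hx
    · rw [d2, md, sub_adj_inr_inr] at h2
      rw [h2.1] at hx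
      exact Or.inr hx

/-- characterization of adjacency between an original vertex and an internal vertex of the
s-subdivision, in terms of codes -/
lemma adj_inl_internal_iff {x : V} {e : SubEdges G} {j : Fin s} :
    (subdivision G s).Adj (inl x) (inr (e, j)) ↔
      (tOf (inr (e, j) : SubdivVerts G s) = 0 ∧
        ((1 = s ∧ (x = e.1.1 ∨ x = e.1.2)) ∨
         (1 ≠ s ∧ (subdivision G 3).Adj (inl x) (codeOf (inr (e, j)))))) := by
  have hj := j.isLt
  rw [sub_adj_inl_inr]
  rcases codeOf_internal e j with ⟨h1, h2, h3⟩ | ⟨h1, h2, h3⟩ | ⟨h1, h2, h3⟩ <;> rw [h1, h2]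
  · -- near the first end: j < (s-1)/2 strictly, so j = 0 case only, s ≥ 2
    rw [d0, sub_adj_inl_inr]
    constructor
    · rintro (⟨rfl, hq⟩ | ⟨rfl, hq⟩)
      · exact ⟨by omega, Or.inr ⟨by omega, Or.inl ⟨rfl, by omega⟩⟩⟩
      · omega
    · rintro ⟨ht, (⟨hs, -⟩ | ⟨hs, (⟨rfl, -⟩ | ⟨rfl, hq⟩)⟩)⟩
      · omega
      · exact Or.inl ⟨rfl, by omega⟩
      · omega
  · -- tie: s odd, j = (s-1)/2
    constructor
    · rintro (⟨rfl, hq⟩ | ⟨rfl, hq⟩)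
      · exact ⟨by omega, Or.inl ⟨by omega, Or.inl rfl⟩⟩
      · exact ⟨by omega, Or.inl ⟨by omega, Or.inr rfl⟩⟩
    · rintro ⟨ht, (⟨hs, hx | hx⟩ | ⟨hs, hadj⟩)⟩
      · exact Or.inl ⟨hx, by omega⟩
      · exact Or.inr ⟨hx, by omega⟩
      · -- 1 ≠ s contradicts tie with t = 0
        omega
  · -- near the second end: j = s-1 case only
    rw [d2, sub_adj_inl_inr]
    constructor
    · rintro (⟨rfl, hq⟩ | ⟨rfl, hq⟩)
      · omega
      · exact ⟨by omega, Or.inr ⟨by omega, Or.inr ⟨rfl, by omega⟩⟩⟩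
    · rintro ⟨ht, (⟨hs, -⟩ | ⟨hs, (⟨rfl, hq⟩ | ⟨rfl, -⟩)⟩)⟩
      · omega
      · omega
      · exact Or.inr ⟨rfl, by omega⟩

/-- characterization of adjacency between two internal vertices of the s-subdivision -/
lemma adj_internal_iff {e e₂ : SubEdges G} {j j₂ : Fin s} :
    (subdivision G s).Adj (inr (e, j)) (inr (e₂, j₂)) ↔
      (e = e₂ ∧
         (((codeOf (inr (e, j)) = codeOf (inr (e₂, j₂)) ∨
              2*tOf (inr (e, j) : SubdivVerts G s)+1 = s ∨
              2*tOf (inr (e₂, j₂) : SubdivVerts G s)+1 = s) ∧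
            (tOf (inr (e, j) : SubdivVerts G s) + 1 = tOf (inr (e₂, j₂) : SubdivVerts G s) ∨
             tOf (inr (e₂, j₂) : SubdivVerts G s) + 1 = tOf (inr (e, j) : SubdivVerts G s))) ∨
          ((2*tOf (inr (e, j) : SubdivVerts G s)+1 ≠ s ∧
              2*tOf (inr (e₂, j₂) : SubdivVerts G s)+1 ≠ s ∧
              codeOf (inr (e, j)) ≠ codeOf (inr (e₂, j₂))) ∧
            tOf (inr (e, j) : SubdivVerts G s) + tOf (inr (e₂, j₂) : SubdivVerts G s) + 2 = s))) := by
  have hj := j.isLt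
  have hj₂ := j₂.isLt
  rw [sub_adj_inr_inr]
  constructor
  · rintro ⟨rfl, hc⟩
    refine ⟨rfl, ?_⟩
    rcases codeOf_internal e j with ⟨h1, h2, h3⟩ | ⟨h1, h2, h3⟩ | ⟨h1, h2, h3⟩ <;>
      rcases codeOf_internal e j₂ with ⟨g1, g2, g3⟩ | ⟨g1, g2, g3⟩ | ⟨g1, g2, g3⟩ <;>
      rw [h1, g1, h2, g2]
    · exact Or.inl ⟨Or.inl rfl, by omega⟩
    · exact Or.inl ⟨Or.inr (Or.inr (by omega)), by omega⟩
    · exact Or.inr ⟨⟨by omega, by omega, d0_ne_d2⟩, by omega⟩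
    · exact Or.inl ⟨Or.inr (Or.inl (by omega)), by omega⟩
    · exact absurd hc (by omega)
    · exact Or.inl ⟨Or.inr (Or.inl (by omega)), by omega⟩
    · exact Or.inr ⟨⟨by omega, by omega, fun hcc => d0_ne_d2 hcc.symm⟩, by omega⟩
    · exact Or.inl ⟨Or.inr (Or.inr (by omega)), by omega⟩
    · exact Or.inl ⟨Or.inl rfl, by omega⟩
  · rintro ⟨rfl, hc⟩
    refine ⟨rfl, ?_⟩
    rcases codeOf_internal e j with ⟨h1, h2, h3⟩ | ⟨h1, h2, h3⟩ | ⟨h1, h2, h3⟩ <;>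
      rcases codeOf_internal e j₂ with ⟨g1, g2, g3⟩ | ⟨g1, g2, g3⟩ | ⟨g1, g2, g3⟩ <;>
      rw [h1, g1, h2, g2] at hc
    · rcases hc with ⟨-, hc⟩ | ⟨⟨-, -, hne⟩, -⟩
      · omega
      · exact absurd rfl hne
    · rcases hc with ⟨-, hc⟩ | ⟨⟨-, hne, -⟩, -⟩
      · omega
      · omega
    · rcases hc with ⟨hcc | hcc | hcc, -⟩ | ⟨-, hc⟩
      · exact absurd hcc d0_ne_d2
      · omega
      · omega
      · omega
    · rcases hc with ⟨-, hc⟩ | ⟨⟨hne, -, -⟩, -⟩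
      · omega
      · omega
    · rcases hc with ⟨-, hc⟩ | ⟨⟨hne, -, -⟩, -⟩
      · omega
      · omega
    · rcases hc with ⟨-, hc⟩ | ⟨⟨hne, -, -⟩, -⟩
      · omega
      · omega
    · rcases hc with ⟨hcc | hcc | hcc, -⟩ | ⟨-, hc⟩
      · exact absurd hcc.symm d0_ne_d2
      · omega
      · omega
      · omega
    · rcases hc with ⟨-, hc⟩ | ⟨⟨-, hne, -⟩, -⟩
      · omega
      · omega
    · rcases hc with ⟨-, hc⟩ | ⟨⟨-, -, hne⟩, -⟩
      · omega
      · exact absurd rfl hne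

end Coding

section Encoding

open Sum Function

lemma fin2_eq (c : Fin 2) : c = 0 ∨ c = 1 := by fin_cases c <;> simp

variable {V : Type} [Fintype V] [LinearOrder V] {G H : SimpleGraph V} {k s : ℕ}

/-- slot of the `c`-th copy of block `i` -/
def sl (i : Fin k) (c : Fin 2) : Fin (2*k) :=
  ⟨2*i.1+c.1, by have := i.isLt; have := c.isLt; omega⟩

lemma sl_inj {i i' : Fin k} {c c' : Fin 2} (h : sl i c = sl i' c') : i = i' ∧ c = c' := by
  rw [sl, sl, Fin.ext_iff] at h
  have h1 := i.isLt
  have h2 := c.isLt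
  have h3 := i'.isLt
  have h4 := c'.isLt
  simp only at h
  constructor <;> rw [Fin.ext_iff] <;> omega

lemma sl_ne {i i' : Fin k} {c c' : Fin 2} (h : i ≠ i' ∨ c ≠ c') : sl i c ≠ sl i' c' := by
  intro hc
  rcases sl_inj hc with ⟨h1, h2⟩
  rcases h with h | h
  · exact h h1
  · exact h h2

lemma sl01 {i : Fin k} : sl i 0 ≠ sl i 1 := sl_ne (Or.inr (by decide))

def blockOf (σ : Fin (2*k)) : Fin k := ⟨σ.1/2, by have := σ.isLt; omega⟩

lemma blockOf_sl (i : Fin k) (c : Fin 2) : blockOf (sl i c) = i := by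
  rw [blockOf, sl, Fin.ext_iff]
  have := c.isLt
  simp only
  omega

lemma sl_blockOf (σ : Fin (2*k)) : ∃ c : Fin 2, σ = sl (blockOf σ) c := by
  refine ⟨⟨σ.1 % 2, by omega⟩, ?_⟩
  rw [sl, blockOf, Fin.ext_iff]
  simp only
  omega

/-- encoding of a tuple of the s-subdivision as a tuple of codes in the 3-subdivision -/
def enc (v : Fin k → SubdivVerts G s) : Fin (2*k) → SubdivVerts G 3 :=
  fun σ => codeOf (v (blockOf σ))

lemma enc_sl (v : Fin k → SubdivVerts G s) (i : Fin k) (c : Fin 2) :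
    enc v (sl i c) = codeOf (v i) := by rw [enc, blockOf_sl]

lemma enc_update (v : Fin k → SubdivVerts G s) (i : Fin k) (u : SubdivVerts G s) :
    enc (Function.update v i u) =
      Function.update (Function.update (enc v) (sl i 0) (codeOf u)) (sl i 1) (codeOf u) := by
  funext σ
  obtain ⟨c, hσ⟩ := sl_blockOf σ
  rw [hσ]
  set i' := blockOf σ with hi'
  rcases eq_or_ne i' i with rfl | hne
  · rw [enc_sl, Function.update_self]
    rcases fin2_eq c with rfl | rfl
    · rw [Function.update_of_ne sl01, Function.update_self]
    · rw [Function.update_self]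
  · rw [enc_sl, Function.update_of_ne hne,
      Function.update_of_ne (sl_ne (Or.inl hne)),
      Function.update_of_ne (sl_ne (Or.inl hne)), enc_sl]

/-- decoding a 3-subdivision vertex together with a distance parameter -/
def dec : SubdivVerts H 3 → ℕ → SubdivVerts H s
  | inl y, _ => inl y
  | inr (g, q), t =>
      if hlt : (if (q:ℕ) = 2 then s-1-t else t) < s then
        inr (g, ⟨(if (q:ℕ) = 2 then s-1-t else t), hlt⟩)
      else inl g.1.1

@[simp] lemma dec_inl (y : V) (t : ℕ) : dec (s := s) (inl y : SubdivVerts H 3) t = inl y := rfl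

lemma dec_d0 {g : SubEdges H} {t : ℕ} (h : 2*t+1 < s) :
    dec (s := s) (d0 g) t = inr (g, ⟨t, by omega⟩) := by
  rw [d0, dec]
  rw [show (((0:Fin 3)):ℕ) = 0 from rfl]
  rw [if_neg (by omega)]
  erw [dif_pos (by omega)]

lemma dec_d2 {g : SubEdges H} {t : ℕ} (h : 2*t+1 < s) :
    dec (s := s) (d2 g) t = inr (g, ⟨s-1-t, by omega⟩) := by
  rw [d2, dec]
  rw [show (((2:Fin 3)):ℕ) = 2 from rfl]
  rw [if_pos rfl]
  erw [dif_pos (by omega)]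

lemma dec_md {g : SubEdges H} {t : ℕ} (h : 2*t+1 = s) :
    dec (s := s) (md g) t = inr (g, ⟨t, by omega⟩) := by
  rw [md, dec]
  rw [show (((1:Fin 3)):ℕ) = 1 from rfl]
  rw [if_neg (by omega)]
  erw [dif_pos (by omega)]

lemma dec_spec_d0 {g : SubEdges H} {t : ℕ} (h : 2*t+1 < s) :
    codeOf (dec (s := s) (d0 g) t) = d0 g ∧ tOf (dec (s := s) (d0 g) t) = t := by
  rw [dec_d0 h]
  constructor
  · show (if 2*t+1 < s then d0 g else if 2*t+1 = s then md g else d2 g) = d0 g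
    rw [if_pos h]
  · show min t (s-1-t) = t
    omega

lemma dec_spec_d2 {g : SubEdges H} {t : ℕ} (h : 2*t+1 < s) :
    codeOf (dec (s := s) (d2 g) t) = d2 g ∧ tOf (dec (s := s) (d2 g) t) = t := by
  rw [dec_d2 h]
  constructor
  · show (if 2*(s-1-t)+1 < s then d0 g else if 2*(s-1-t)+1 = s then md g else d2 g) = d2 g
    rw [if_neg (by omega), if_neg (by omega)]
  · show min (s-1-t) (s-1-(s-1-t)) = t
    omega

lemma dec_spec_md {g : SubEdges H} {t : ℕ} (h : 2*t+1 = s) :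
    codeOf (dec (s := s) (md g) t) = md g ∧ tOf (dec (s := s) (md g) t) = t := by
  rw [dec_md (by omega)]
  constructor
  · show (if 2*t+1 < s then d0 g else if 2*t+1 = s then md g else d2 g) = md g
    rw [if_neg (by omega), if_pos h]
  · show min t (s-1-t) = t
    omega

end Encoding

section TransferFormulas

open Sum Function

variable {V : Type} [Fintype V] [LinearOrder V] {G H : SimpleGraph V} {K : ℕ}
variable (hdG : ∀ v : V, 3 ≤ Set.ncard {w : V | G.Adj v w})
variable (hdH : ∀ v : V, 3 ≤ Set.ncard {w : V | H.Adj v w})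

/-- transfer of a common-neighbour formula between two pebbles -/
lemma TF1 {R : ℕ} {va : Fin K → SubdivVerts G 3} {wb : Fin K → SubdivVerts H 3}
    (h : wlEq (subdivision G 3) (subdivision H 3) K (R+1) va wb) (ι₁ ι₂ : Fin K) :
    (∃ z, (subdivision G 3).Adj (va ι₁) z ∧ (subdivision G 3).Adj z (va ι₂)) →
    (∃ z', (subdivision H 3).Adj (wb ι₁) z' ∧ (subdivision H 3).Adj z' (wb ι₂)) := by
  rintro ⟨z, h1, h2⟩
  obtain ⟨b, hb⟩ := wlEq_step h
  refine ⟨b z, ?_, ?_⟩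
  · rw [(subdivision H 3).adj_comm]
    exact (((hb z).1 ι₁).2).1 (by rwa [(subdivision G 3).adj_comm] at h1)
  · exact (((hb z).1 ι₂).2).1 h2

include hdG hdH in
/-- transfer of a common-middle-witness formula between two pebbles -/
lemma TF2 (hK : 0 < K) {R : ℕ} {va : Fin K → SubdivVerts G 3} {wb : Fin K → SubdivVerts H 3}
    (h : wlEq (subdivision G 3) (subdivision H 3) K (R+3) va wb) (ι₁ ι₂ : Fin K) :
    (∃ m, IsM (subdivision G 3) m ∧ (subdivision G 3).Adj (va ι₁) m ∧
      (subdivision G 3).Adj (va ι₂) m) →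
    (∃ m', IsM (subdivision H 3) m' ∧ (subdivision H 3).Adj (wb ι₁) m' ∧
      (subdivision H 3).Adj (wb ι₂) m') := by
  rintro ⟨m, hm, h1, h2⟩
  obtain ⟨b, hb⟩ := wlEq_step h
  refine ⟨b m, ?_, ?_, ?_⟩
  · exact (val_mid hdG hdH (fun u κ => (hb u).2 κ) hK rfl m).1 hm
  · rw [(subdivision H 3).adj_comm]
    exact (((hb m).1 ι₁).2).1 (by rwa [(subdivision G 3).adj_comm] at h1)
  · rw [(subdivision H 3).adj_comm]
    exact (((hb m).1 ι₂).2).1 (by rwa [(subdivision G 3).adj_comm] at h2)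

include hdG in
lemma bridge_fwd {x x₂ : V} (h : G.Adj x x₂) :
    ∃ z m z', (subdivision G 3).Adj (inl x) z ∧ (subdivision G 3).Adj z m ∧
      IsM (subdivision G 3) m ∧ (subdivision G 3).Adj m z' ∧
      (subdivision G 3).Adj z' (inl x₂) := by
  set e := edgeOfAdj h with he
  rcases edgeOfAdj_spec h with ⟨h1, h2⟩ | ⟨h1, h2⟩
  · refine ⟨d0 e, md e, d2 e, ?_, adj3_d0.2 (Or.inr rfl),
      (isM_iff hdG).2 ⟨e, rfl⟩, (adj3_d2.2 (Or.inr rfl)).symm, ?_⟩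
    · have := ((adj3_d0 (e := e) (y := inl e.1.1)).2 (Or.inl rfl)).symm
      rwa [h1] at this
    · have := (adj3_d2 (e := e) (y := inl e.1.2)).2 (Or.inl rfl)
      rwa [h2] at this
  · refine ⟨d2 e, md e, d0 e, ?_, adj3_d2.2 (Or.inr rfl),
      (isM_iff hdG).2 ⟨e, rfl⟩, (adj3_d0.2 (Or.inr rfl)).symm, ?_⟩
    · have := ((adj3_d2 (e := e) (y := inl e.1.2)).2 (Or.inl rfl)).symm
      rwa [h2] at this
    · have := (adj3_d0 (e := e) (y := inl e.1.1)).2 (Or.inl rfl)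
      rwa [h1] at this

include hdH in
lemma bridge_back {y y₂ : V} (hne : y ≠ y₂) {z m z' : SubdivVerts H 3}
    (h1 : (subdivision H 3).Adj (inl y) z) (h2 : (subdivision H 3).Adj z m)
    (hm : IsM (subdivision H 3) m) (h3 : (subdivision H 3).Adj m z')
    (h4 : (subdivision H 3).Adj z' (inl y₂)) : H.Adj y y₂ := by
  obtain ⟨f, rfl⟩ := (isM_iff hdH).1 hm
  rw [(subdivision H 3).adj_comm, adj3_md] at h2
  rw [adj3_md] at h3
  rw [adj3_inl] at h1
  erw [(subdivision H 3).adj_comm, adj3_inl] at h4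
  obtain ⟨f1, ⟨hz1, hy1⟩ | ⟨hz1, hy1⟩⟩ := h1 <;>
    obtain ⟨f2, ⟨hz2, hy2⟩ | ⟨hz2, hy2⟩⟩ := h4 <;>
    rcases h2 with h2 | h2 <;> rcases h3 with h3 | h3 <;>
    rw [hz1] at h2 <;> rw [hz2] at h3
  all_goals first
    | (exact absurd h2 d0_ne_d2)
    | (exact absurd h2.symm d0_ne_d2)
    | (exact absurd h3 d0_ne_d2)
    | (exact absurd h3.symm d0_ne_d2)
    | skip
  ·
    rw [d0_inj] at h2
    rw [d0_inj] at h3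
    subst h2
    subst h3
    exact absurd (hy1.trans hy2.symm) hne
  · rw [d0_inj] at h2
    rw [d2_inj] at h3
    subst h2; subst h3
    rw [hy1, hy2]
    exact SubEdges.adj _
  · rw [d2_inj] at h2
    rw [d0_inj] at h3
    subst h2; subst h3
    rw [hy1, hy2]
    exact (SubEdges.adj _).symm
  · rw [d2_inj] at h2
    rw [d2_inj] at h3
    subst h2; subst h3
    exact absurd (hy1.trans hy2.symm) hne

include hdG hdH in
/-- transfer of adjacency in `G` between two pebbled original vertices (used for `s = 0`) -/
lemma TF3 (hK : 0 < K) {R : ℕ} {va : Fin K → SubdivVerts G 3} {wb : Fin K → SubdivVerts H 3}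
    (h : wlEq (subdivision G 3) (subdivision H 3) K (R+5) va wb) {ι₁ ι₂ : Fin K}
    {x x₂ y y₂ : V}
    (hva1 : va ι₁ = inl x) (hva2 : va ι₂ = inl x₂)
    (hwb1 : wb ι₁ = inl y) (hwb2 : wb ι₂ = inl y₂)
    (hG : G.Adj x x₂) : H.Adj y y₂ := by
  have hne12 : ι₁ ≠ ι₂ := by
    rintro rfl
    rw [hva1] at hva2
    exact hG.ne (sdv_inl_inj.1 hva2)
  have hyne : y ≠ y₂ := by
    intro hc
    have := ((wlEq_atp h ι₁ ι₂).1).2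
    rw [hva1, hva2, hwb1, hwb2, hc] at this
    exact hG.ne (sdv_inl_inj.1 (this rfl))
  obtain ⟨z, m, z', hxz, hzm, hm, hmz', hz'x₂⟩ := bridge_fwd hdG hG
  obtain ⟨b₁, hb₁⟩ := wlEq_step h
  have fact1 : (subdivision H 3).Adj (inl y) (b₁ z) := by
    have := (((hb₁ z).1 ι₁).2).1 (by erw [hva1, (subdivision G 3).adj_comm]; exact hxz)
    erw [hwb1, (subdivision H 3).adj_comm] at this; exact this
  have state1 := (hb₁ z).2 ι₁
  obtain ⟨b₂, hb₂⟩ := wlEq_step state1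
  have fact2 : (subdivision H 3).Adj (b₁ z) (b₂ m) := by
    have := (((hb₂ m).1 ι₁).2).1
      (by rw [Function.update_self, (subdivision G 3).adj_comm]; exact hzm)
    rwa [Function.update_self, (subdivision H 3).adj_comm] at this
  have factM : IsM (subdivision H 3) (b₂ m) :=
    (val_mid hdG hdH (fun u κ => (hb₂ u).2 κ) hK rfl m).1 hm
  have state2 := (hb₂ m).2 ι₁
  obtain ⟨b₃, hb₃⟩ := wlEq_step state2
  have fact3 : (subdivision H 3).Adj (b₂ m) (b₃ z') := by
    have := (((hb₃ z').1 ι₁).2).1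
      (by rw [Function.update_self, (subdivision G 3).adj_comm]; exact hmz')
    rwa [Function.update_self, (subdivision H 3).adj_comm] at this
  have fact4 : (subdivision H 3).Adj (b₃ z') (inl y₂) := by
    have := (((hb₃ z').1 ι₂).2).1
      (by rw [Function.update_of_ne hne12.symm, Function.update_of_ne hne12.symm, hva2]
          exact hz'x₂)
    rwa [Function.update_of_ne hne12.symm, Function.update_of_ne hne12.symm, hwb2] at this
  exact bridge_back hdH hyne fact1 fact2 factM fact3 fact4

end TransferFormulas

section MainDefs

open Sum Function

variable {V : Type} [Fintype V] [LinearOrder V] {G H : SimpleGraph V} {k s : ℕ}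

lemma shape_code {u : SubdivVerts G s} :
    (∃ x, u = inl x) ↔ (∃ x, codeOf u = inl x) := by
  rcases u with x | ⟨e, j⟩
  · exact ⟨fun _ => ⟨x, rfl⟩, fun _ => ⟨x, rfl⟩⟩
  · constructor
    · rintro ⟨x, hx⟩
      exact absurd hx sdv_inr_ne_inl
    · rintro ⟨x, hx⟩
      rcases codeOf_cases e j with h | h | h <;> rw [h] at hx <;>
        exact absurd hx sdv_inr_ne_inl

/-- the invariant carried through the simulation -/
def WLInv (r : ℕ) (v : Fin k → SubdivVerts G s) (w : Fin k → SubdivVerts H s) : Prop :=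
  atpEq (subdivision G s) (subdivision H s) v w ∧
  (∀ i, tOf (v i) = tOf (w i)) ∧
  wlEq (subdivision G 3) (subdivision H 3) (2*k) (8*r+8) (enc v) (enc w)

variable (hdG : ∀ v : V, 3 ≤ Set.ncard {w : V | G.Adj v w})
variable (hdH : ∀ v : V, 3 ≤ Set.ncard {w : V | H.Adj v w})

section BS

variable (hk : 0 < k) {r : ℕ} {va : Fin (2*k) → SubdivVerts G 3} {wb : Fin (2*k) → SubdivVerts H 3}
  {b : SubdivVerts G 3 ≃ SubdivVerts H 3}
  (hbrec : ∀ (u : SubdivVerts G 3) (ι : Fin (2*k)),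
    wlEq (subdivision G 3) (subdivision H 3) (2*k) r
      (Function.update va ι u) (Function.update wb ι (b u)))

include hdG hdH hk hbrec in
lemma bs_spec {r' : ℕ} (hr : r = r' + 2) (u : SubdivVerts G s) :
    codeOf (dec (b (codeOf u)) (tOf u) : SubdivVerts H s) = b (codeOf u) ∧
    tOf (dec (b (codeOf u)) (tOf u) : SubdivVerts H s) = tOf u ∧
    ((∃ x, u = inl x) ↔ (∃ y, (dec (b (codeOf u)) (tOf u) : SubdivVerts H s) = inl y)) := by
  have hK : 0 < 2*k := by omega
  rcases u with x | ⟨e, j⟩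
  · obtain ⟨y, hy⟩ := (val_inl hdG hdH hbrec hK (by omega : r = (r'+1) + 1) (inl x)).1 ⟨x, rfl⟩
    rw [codeOf_inl, hy, dec_inl]
    exact ⟨codeOf_inl y, rfl, fun _ => ⟨y, rfl⟩, fun _ => ⟨x, rfl⟩⟩
  · have hshape : ¬ ∃ x, (inr (e, j) : SubdivVerts G s) = inl x := by
      rintro ⟨x, hx⟩; exact sdv_inr_ne_inl hx
    rcases codeOf_internal e j with ⟨h1, h2, h3⟩ | ⟨h1, h2, h3⟩ | ⟨h1, h2, h3⟩ <;> rw [h1, h2]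
    · obtain ⟨g, hg | hg⟩ := val_drt' hdG hdH hbrec hK hr (Or.inl rfl) <;> rw [hg]
      · obtain ⟨hc, ht⟩ := dec_spec_d0 (s := s) (g := g) (t := (j:ℕ)) (by omega)
        refine ⟨hc, ht, iff_of_false hshape ?_⟩
        rintro ⟨y, hy⟩
        rw [dec_d0 (by omega)] at hy
        exact sdv_inr_ne_inl hy
      · obtain ⟨hc, ht⟩ := dec_spec_d2 (s := s) (g := g) (t := (j:ℕ)) (by omega)
        refine ⟨hc, ht, iff_of_false hshape ?_⟩
        rintro ⟨y, hy⟩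
        rw [dec_d2 (by omega)] at hy
        exact sdv_inr_ne_inl hy
    · obtain ⟨g, hg⟩ := val_mid' hdG hdH hbrec hK hr e
      rw [hg]
      obtain ⟨hc, ht⟩ := dec_spec_md (s := s) (g := g) (t := (j:ℕ)) (by omega)
      refine ⟨hc, ht, iff_of_false hshape ?_⟩
      rintro ⟨y, hy⟩
      rw [dec_md (by omega)] at hy
      exact sdv_inr_ne_inl hy
    · obtain ⟨g, hg | hg⟩ := val_drt' hdG hdH hbrec hK hr (Or.inr rfl) <;> rw [hg]
      · obtain ⟨hc, ht⟩ := dec_spec_d0 (s := s) (g := g) (t := s-1-(j:ℕ)) (by omega)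
        refine ⟨hc, ht, iff_of_false hshape ?_⟩
        rintro ⟨y, hy⟩
        rw [dec_d0 (by omega)] at hy
        exact sdv_inr_ne_inl hy
      · obtain ⟨hc, ht⟩ := dec_spec_d2 (s := s) (g := g) (t := s-1-(j:ℕ)) (by omega)
        refine ⟨hc, ht, iff_of_false hshape ?_⟩
        rintro ⟨y, hy⟩
        rw [dec_d2 (by omega)] at hy
        exact sdv_inr_ne_inl hy

end BS

end MainDefs

section RelTransfer

open Sum Function

variable {V : Type} [Fintype V] [LinearOrder V] {G H : SimpleGraph V} {k s : ℕ}
variable (hdG : ∀ v : V, 3 ≤ Set.ncard {w : V | G.Adj v w})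
variable (hdH : ∀ v : V, 3 ≤ Set.ncard {w : V | H.Adj v w})
variable (hk : 0 < k) {L : ℕ} {v : Fin k → SubdivVerts G s} {w : Fin k → SubdivVerts H s}
  {b : SubdivVerts G 3 ≃ SubdivVerts H 3}
  (htm : ∀ i, tOf (v i) = tOf (w i))
  (hbeq : ∀ (u : SubdivVerts G 3) (ι : Fin (2*k)), (u = enc v ι ↔ b u = enc w ι))
  (hbadj : ∀ (u : SubdivVerts G 3) (ι : Fin (2*k)),
    ((subdivision G 3).Adj u (enc v ι) ↔ (subdivision H 3).Adj (b u) (enc w ι)))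
  (hbrec : ∀ (u : SubdivVerts G 3) (ι : Fin (2*k)),
    wlEq (subdivision G 3) (subdivision H 3) (2*k) (L+7)
      (Function.update (enc v) ι u) (Function.update (enc w) ι (b u)))

include hk hbeq hbrec in
lemma top_of_rec : wlEq (subdivision G 3) (subdivision H 3) (2*k) (L+7) (enc v) (enc w) := by
  have hK : 0 < 2*k := by omega
  have h0 := hbrec (enc v ⟨0, hK⟩) ⟨0, hK⟩
  rw [Function.update_eq_self, (hbeq (enc v ⟨0, hK⟩) ⟨0, hK⟩).1 rfl,
    Function.update_eq_self] at h0
  exact h0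

include hbeq in
lemma flip_eq : ∀ (u' : SubdivVerts H 3) (ι : Fin (2*k)),
    (u' = enc w ι ↔ b.symm u' = enc v ι) := by
  intro u' ι
  have := hbeq (b.symm u') ι
  rw [b.apply_symm_apply] at this
  exact this.symm

include hbadj in
lemma flip_adj : ∀ (u' : SubdivVerts H 3) (ι : Fin (2*k)),
    ((subdivision H 3).Adj u' (enc w ι) ↔ (subdivision G 3).Adj (b.symm u') (enc v ι)) := by
  intro u' ι
  have := hbadj (b.symm u') ι
  rw [b.apply_symm_apply] at this
  exact this.symm

include hbrec in
lemma flip_rec : ∀ (u' : SubdivVerts H 3) (ι : Fin (2*k)),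
    wlEq (subdivision H 3) (subdivision G 3) (2*k) (L+7)
      (Function.update (enc w) ι u') (Function.update (enc v) ι (b.symm u')) := by
  intro u' ι
  have := wlEq_symm (hbrec (b.symm u') ι)
  rwa [b.apply_symm_apply] at this

include hdG hdH hk htm hbeq hbrec in
lemma relEq (u : SubdivVerts G s) (i : Fin k) :
    (u = v i ↔ (dec (b (codeOf u)) (tOf u) : SubdivVerts H s) = w i) := by
  obtain ⟨hcode, ht, -⟩ :=
    bs_spec hdG hdH hk (va := enc v) (wb := enc w) hbrec (r' := L+5) rfl u
  have hG : (u = v i) ↔ (codeOf u = codeOf (v i) ∧ tOf u = tOf (v i)) := eq_iff_code_t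
  have hH : ((dec (b (codeOf u)) (tOf u) : SubdivVerts H s) = w i) ↔
      (codeOf (dec (b (codeOf u)) (tOf u) : SubdivVerts H s) = codeOf (w i) ∧
       tOf (dec (b (codeOf u)) (tOf u) : SubdivVerts H s) = tOf (w i)) := eq_iff_code_t
  rw [hG, hH, hcode, ht, ← htm i]
  have h1 := hbeq (codeOf u) (sl i 0)
  rw [enc_sl, enc_sl] at h1
  exact and_congr h1 Iff.rfl

end RelTransfer

section RelAdj

open Sum Function

variable {V : Type} [Fintype V] [LinearOrder V] {G H : SimpleGraph V} {k s : ℕ}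

lemma dec_codeOf (u : SubdivVerts G s) : dec (codeOf u) (tOf u) = u := by
  rcases u with x | ⟨e, j⟩
  · rfl
  · have hj := j.isLt
    rcases codeOf_internal e j with ⟨h1, h2, h3⟩ | ⟨h1, h2, h3⟩ | ⟨h1, h2, h3⟩ <;> rw [h1, h2]
    · rw [dec_d0 (by omega)]
    · rw [dec_md (by omega)]
    · erw [dec_d2 (by omega), sdv_inr_inj, Prod.mk.injEq, Fin.ext_iff]
      exact ⟨rfl, by simp only; omega⟩

variable (hdG : ∀ v : V, 3 ≤ Set.ncard {w : V | G.Adj v w})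
variable (hdH : ∀ v : V, 3 ≤ Set.ncard {w : V | H.Adj v w})
variable (hk : 0 < k) {L : ℕ} {v : Fin k → SubdivVerts G s} {w : Fin k → SubdivVerts H s}
  {b : SubdivVerts G 3 ≃ SubdivVerts H 3}
  (htm : ∀ i, tOf (v i) = tOf (w i))
  (hbeq : ∀ (u : SubdivVerts G 3) (ι : Fin (2*k)), (u = enc v ι ↔ b u = enc w ι))
  (hbadj : ∀ (u : SubdivVerts G 3) (ι : Fin (2*k)),
    ((subdivision G 3).Adj u (enc v ι) ↔ (subdivision H 3).Adj (b u) (enc w ι)))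
  (hbrec : ∀ (u : SubdivVerts G 3) (ι : Fin (2*k)),
    wlEq (subdivision G 3) (subdivision H 3) (2*k) (L+7)
      (Function.update (enc v) ι u) (Function.update (enc w) ι (b u)))

include hdG hdH hk htm hbeq hbadj hbrec in
lemma relAdj_fwd (u : SubdivVerts G s) (i : Fin k) :
    (subdivision G s).Adj u (v i) →
      (subdivision H s).Adj (dec (b (codeOf u)) (tOf u) : SubdivVerts H s) (w i) := by
  intro hadj
  have hK : 0 < 2*k := by omega
  have htop := top_of_rec hk hbeq hbrec
  obtain ⟨hcode, htb, hshu⟩ := bs_spec hdG hdH hk hbrec (r' := L+5) rfl u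
  have hshi : (∃ x, v i = inl x) ↔ (∃ y, w i = inl y) := by
    rw [shape_code (s := s), shape_code (s := s)]
    have h2 := pebbled_inl hdG hdH (r := L+6) htop (sl i 0)
    rwa [enc_sl, enc_sl] at h2
  have hti : tOf (v i) = tOf (w i) := htm i
  rcases hu : u with x | ⟨e, j⟩ <;> rcases hv : v i with x₂ | ⟨e₂, j₂⟩ <;> rw [hu, hv] at hadj
  · -- inl-inl, forces s = 0
    obtain ⟨hs0, hGadj⟩ := sub_adj_inl_inl.1 hadj
    obtain ⟨y, hy⟩ := (val_inl hdG hdH hbrec hK (r' := L+6) rfl (inl x)).1 ⟨x, rfl⟩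
    obtain ⟨y₂, hy₂⟩ := hshi.1 ⟨x₂, hv⟩
    rw [codeOf_inl, hy, dec_inl, hy₂]
    refine sub_adj_inl_inl.2 ⟨hs0, ?_⟩
    refine TF3 hdG hdH hK (R := L+2) (hbrec (inl x) (sl i 1))
      (ι₁ := sl i 1) (ι₂ := sl i 0) (Function.update_self _ _ _)
      (by erw [Function.update_of_ne sl01, enc_sl, hv, codeOf_inl]) ?_ ?_ hGadj
    · rw [Function.update_self, hy]
    · rw [Function.update_of_ne sl01, enc_sl, hy₂, codeOf_inl]
  · -- inl-internal
    obtain ⟨y, hy⟩ := (val_inl hdG hdH hbrec hK (r' := L+6) rfl (inl x)).1 ⟨x, rfl⟩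
    rcases hw : w i with y₂ | ⟨g₂, j₂'⟩
    · exact absurd (hshi.2 ⟨y₂, hw⟩) (by rw [hv]; rintro ⟨x', hx'⟩; exact sdv_inr_ne_inl hx')
    obtain ⟨ht0, hcase⟩ := adj_inl_internal_iff.1 hadj
    rw [codeOf_inl, hy, dec_inl]
    refine adj_inl_internal_iff.2 ⟨?_, ?_⟩
    · rw [← hw, ← hti, hv, ht0]
    rcases hcase with ⟨hs1, hends⟩ | ⟨hs1, hG3⟩
    · -- s = 1 : tie, endpoints transfer through common-neighbour formula
      left
      refine ⟨hs1, ?_⟩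
      -- middle codes
      have htie : codeOf (inr (e₂, j₂)) = md e₂ := by
        rw [tie_iff, ht0]
        omega
      have htie' : codeOf (inr (g₂, j₂')) = md g₂ := by
        rw [tie_iff]
        have : tOf (inr (g₂, j₂') : SubdivVerts H s) = 0 := by rw [← hw, ← hti, hv, ht0]
        rw [this]
        omega
      have hform := (endpoint_iff (x := x) (e := e₂)).1 hends
      rw [← htie] at hform
      -- transfer via the state with (inl x) placed at slot (sl i 1)
      have state := hbrec (inl x) (sl i 1)
      have htr := TF1 (R := L+6) state (sl i 1) (sl i 0) ?_
      · obtain ⟨z', hz1, hz2⟩ := htr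
        rw [Function.update_self, hy] at hz1
        rw [Function.update_of_ne sl01, enc_sl, hw, htie'] at hz2
        exact (endpoint_iff (x := y) (e := g₂)).2 ⟨z', hz1, hz2⟩
      · obtain ⟨z, hz1, hz2⟩ := hform
        refine ⟨z, ?_, ?_⟩
        · erw [Function.update_self]; assumption
        · erw [Function.update_of_ne sl01, enc_sl, hv]; assumption
    · -- dart case : atomic transfer
      right
      refine ⟨hs1, ?_⟩
      have h3 := hbadj (inl x) (sl i 0)
      rw [enc_sl, enc_sl, hv, hw, hy] at h3
      exact h3.1 hG3
  · -- internal-inl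
    rcases hw : w i with y₂ | ⟨g₂, j₂'⟩
    swap
    · exact absurd (hshi.1 ⟨x₂, hv⟩) (by rw [hw]; rintro ⟨y', hy'⟩; exact sdv_inr_ne_inl hy')
    erw [(subdivision G s).adj_comm] at hadj
    erw [(subdivision H s).adj_comm]
    -- the decoded vertex is internal; get its presentation
    have hbushape : ¬ ∃ y', (dec (b (codeOf (inr (e, j)))) (tOf (inr (e, j) : SubdivVerts G s))
        : SubdivVerts H s) = inl y' := by
      rw [← hu, ← hshu, hu]
      rintro ⟨x', hx'⟩
      exact sdv_inr_ne_inl hx'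
    rcases hbu : (dec (b (codeOf (inr (e, j)))) (tOf (inr (e, j) : SubdivVerts G s))
        : SubdivVerts H s) with y' | ⟨gu, ju⟩
    · exact absurd ⟨y', hbu⟩ hbushape
    obtain ⟨ht0, hcase⟩ := adj_inl_internal_iff.1 hadj
    refine adj_inl_internal_iff.2 ⟨?_, ?_⟩
    · rw [← hbu, ← hu, htb, hu, ht0]
    rcases hcase with ⟨hs1, hends⟩ | ⟨hs1, hG3⟩
    · left
      refine ⟨hs1, ?_⟩
      have htie : codeOf (inr (e, j)) = md e := by
        rw [tie_iff, ht0]; omega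
      have htie' : codeOf (inr (gu, ju)) = md gu := by
        rw [tie_iff]
        have h5 : tOf (inr (gu, ju) : SubdivVerts H s) = 0 := by rw [← hbu, ← hu, htb, hu, ht0]
        rw [h5]; omega
      have hform := (endpoint_iff (x := x₂) (e := e)).1 hends
      rw [← htie] at hform
      have state := hbrec (codeOf (inr (e, j))) (sl i 1)
      have htr := TF1 (R := L+6) state (sl i 0) (sl i 1) ?_
      · obtain ⟨z', hz1, hz2⟩ := htr
        rw [Function.update_of_ne sl01, enc_sl, hw, codeOf_inl] at hz1
        rw [Function.update_self] at hz2
        have h6 : b (codeOf (inr (e, j))) = md gu := by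
          rw [← htie']
          rw [← hu, ← hcode, hu, hbu]
        rw [h6] at hz2
        exact (endpoint_iff (x := y₂) (e := gu)).2 ⟨z', hz1, hz2⟩
      · obtain ⟨z, hz1, hz2⟩ := hform
        refine ⟨z, ?_, ?_⟩
        · rw [Function.update_of_ne sl01, enc_sl, hv, codeOf_inl]
          exact hz1
        · rwa [Function.update_self]
    · right
      refine ⟨hs1, ?_⟩
      have h3 := hbadj (codeOf (inr (e, j))) (sl i 0)
      rw [enc_sl, enc_sl, hv, hw, codeOf_inl, codeOf_inl] at h3
      have h4 : (subdivision G 3).Adj (codeOf (inr (e, j))) (inl x₂) := by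
        erw [(subdivision G 3).adj_comm] at hG3; exact hG3
      have h5 := h3.1 h4
      have h6 : b (codeOf (inr (e, j))) = codeOf (inr (gu, ju)) := by
        rw [← hu, ← hcode, hu, hbu]
      rw [h6] at h5
      erw [(subdivision H 3).adj_comm] at h5; exact h5
  · -- internal-internal
    rcases hw : w i with y₂ | ⟨g₂, j₂'⟩
    · exact absurd (hshi.2 ⟨y₂, hw⟩) (by rw [hv]; rintro ⟨x', hx'⟩; exact sdv_inr_ne_inl hx')
    have hbushape : ¬ ∃ y', (dec (b (codeOf (inr (e, j)))) (tOf (inr (e, j) : SubdivVerts G s))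
        : SubdivVerts H s) = inl y' := by
      rw [← hu, ← hshu, hu]
      rintro ⟨x', hx'⟩
      exact sdv_inr_ne_inl hx'
    rcases hbu : (dec (b (codeOf (inr (e, j)))) (tOf (inr (e, j) : SubdivVerts G s))
        : SubdivVerts H s) with y' | ⟨gu, ju⟩
    · exact absurd ⟨y', hbu⟩ hbushape
    have hcodebu : codeOf (inr (gu, ju)) = b (codeOf (inr (e, j))) := by
      rw [← hbu, ← hu, hcode, hu]
    have htbu : tOf (inr (gu, ju) : SubdivVerts H s) = tOf (inr (e, j) : SubdivVerts G s) := by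
      rw [← hbu, ← hu, htb, hu]
    have htwi : tOf (inr (g₂, j₂') : SubdivVerts H s) = tOf (inr (e₂, j₂) : SubdivVerts G s) := by
      rw [← hw, ← hti, hv]
    obtain ⟨heq, harith⟩ := adj_internal_iff.1 hadj
    subst heq
    -- edge equality on the H side via the SameEdge transfer
    have hsame : SameEdge (subdivision H 3) (codeOf (inr (gu, ju))) (codeOf (inr (g₂, j₂'))) := by
      have hsG : SameEdge (subdivision G 3) (codeOf (inr (e, j))) (codeOf (inr (e, j₂))) :=
        (sameEdge_iff hdG (codeOf_cases e j) (codeOf_cases e j₂)).2 rfl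
      rcases hsG with h1 | h1 | ⟨m, hm, h1, h2⟩
      · left
        have h2 := hbeq (codeOf (inr (e, j))) (sl i 0)
        rw [enc_sl, enc_sl, hv, hw] at h2
        rw [hcodebu]
        exact h2.1 h1
      · right; left
        have h2 := hbadj (codeOf (inr (e, j))) (sl i 0)
        rw [enc_sl, enc_sl, hv, hw] at h2
        rw [hcodebu]
        exact h2.1 h1
      · right; right
        -- transfer the common middle through a placement
        have state := hbrec (codeOf (inr (e, j))) (sl i 1)
        have htr := TF2 hdG hdH hK (R := L+4) state (sl i 1) (sl i 0) ?_
        · obtain ⟨m', hm', h1', h2'⟩ := htr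
          rw [Function.update_self] at h1'
          rw [Function.update_of_ne sl01, enc_sl, hw] at h2'
          refine ⟨m', hm', ?_, ?_⟩
          · rwa [hcodebu]
          · exact h2'
        · refine ⟨m, hm, ?_, ?_⟩
          · rw [Function.update_self]
            exact h1
          · rw [Function.update_of_ne sl01, enc_sl, hv]
            exact h2
    have hgeq : gu = g₂ := by
      have := (sameEdge_iff hdH (codeOf_cases gu ju) (codeOf_cases g₂ j₂')).1 hsame
      exact this
    subst hgeq
    refine adj_internal_iff.2 ⟨rfl, ?_⟩
    -- code equality iff
    have hceq : (codeOf (inr (e, j)) = codeOf (inr (e, j₂))) ↔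
        (codeOf (inr (gu, ju)) = codeOf (inr (gu, j₂'))) := by
      have h2 := hbeq (codeOf (inr (e, j))) (sl i 0)
      rw [enc_sl, enc_sl, hv, hw] at h2
      rw [hcodebu]
      exact h2
    rw [htbu, htwi]
    rcases harith with ⟨hc1, hc2⟩ | ⟨⟨hc1, hc2, hc3⟩, hc4⟩
    · left
      refine ⟨?_, hc2⟩
      rcases hc1 with hc1 | hc1 | hc1
      · exact Or.inl (hceq.1 hc1)
      · exact Or.inr (Or.inl hc1)
      · exact Or.inr (Or.inr hc1)
    · right
      exact ⟨⟨hc1, hc2, fun hcc => hc3 (hceq.2 hcc)⟩, hc4⟩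

end RelAdj

section MoreTransfer

open Sum Function

variable {V : Type} [Fintype V] [LinearOrder V] {G H : SimpleGraph V} {k s : ℕ}
variable (hdG : ∀ v : V, 3 ≤ Set.ncard {w : V | G.Adj v w})
variable (hdH : ∀ v : V, 3 ≤ Set.ncard {w : V | H.Adj v w})

section Rel
variable (hk : 0 < k) {L : ℕ} {v : Fin k → SubdivVerts G s} {w : Fin k → SubdivVerts H s}
  {b : SubdivVerts G 3 ≃ SubdivVerts H 3}
  (htm : ∀ i, tOf (v i) = tOf (w i))
  (hbeq : ∀ (u : SubdivVerts G 3) (ι : Fin (2*k)), (u = enc v ι ↔ b u = enc w ι))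
  (hbadj : ∀ (u : SubdivVerts G 3) (ι : Fin (2*k)),
    ((subdivision G 3).Adj u (enc v ι) ↔ (subdivision H 3).Adj (b u) (enc w ι)))
  (hbrec : ∀ (u : SubdivVerts G 3) (ι : Fin (2*k)),
    wlEq (subdivision G 3) (subdivision H 3) (2*k) (L+7)
      (Function.update (enc v) ι u) (Function.update (enc w) ι (b u)))

include hdG hdH hk htm hbeq hbadj hbrec in
lemma relAdj (u : SubdivVerts G s) (i : Fin k) :
    ((subdivision G s).Adj u (v i) ↔
      (subdivision H s).Adj (dec (b (codeOf u)) (tOf u) : SubdivVerts H s) (w i)) := by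
  refine ⟨relAdj_fwd hdG hdH hk htm hbeq hbadj hbrec u i, fun hadj => ?_⟩
  obtain ⟨hcode, htb, -⟩ :=
    bs_spec hdG hdH hk (va := enc v) (wb := enc w) hbrec (r' := L+5) rfl u
  have hback := relAdj_fwd hdH hdG hk (fun i => (htm i).symm)
    (flip_eq hbeq) (flip_adj hbadj) (flip_rec hbrec)
    (dec (b (codeOf u)) (tOf u) : SubdivVerts H s) i hadj
  rw [hcode, htb, Equiv.symm_apply_apply, dec_codeOf] at hback
  exact hback

end Rel

include hdG hdH in
lemma dec_pebbled_spec {R : ℕ} {v : Fin k → SubdivVerts G s} {wb : Fin (2*k) → SubdivVerts H 3}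
    (hk : 0 < k)
    (htr : wlEq (subdivision G 3) (subdivision H 3) (2*k) (R+2) (enc v) wb) (i : Fin k) :
    codeOf (dec (wb (sl i 0)) (tOf (v i)) : SubdivVerts H s) = wb (sl i 0) ∧
    tOf (dec (wb (sl i 0)) (tOf (v i)) : SubdivVerts H s) = tOf (v i) ∧
    ((∃ x, v i = inl x) ↔ ∃ y, (dec (wb (sl i 0)) (tOf (v i)) : SubdivVerts H s) = inl y) := by
  have hK : 0 < 2*k := by omega
  rcases hv : v i with x | ⟨e, j⟩
  · have h1 := pebbled_inl hdG hdH (r := R+1) htr (sl i 0)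
    rw [enc_sl, hv, codeOf_inl] at h1
    obtain ⟨y, hy⟩ := h1.1 ⟨x, rfl⟩
    rw [hy]
    exact ⟨rfl, rfl, fun _ => ⟨y, rfl⟩, fun _ => ⟨x, rfl⟩⟩
  · have hshape : ¬ ∃ x', (inr (e, j) : SubdivVerts G s) = inl x' := by
      rintro ⟨x', hx'⟩; exact sdv_inr_ne_inl hx'
    rcases codeOf_internal e j with ⟨h1, h2, h3⟩ | ⟨h1, h2, h3⟩ | ⟨h1, h2, h3⟩ <;> rw [h2]
    · have hD : IsD (subdivision G 3) (enc v (sl i 0)) := by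
        rw [enc_sl, hv, h1]
        exact (isD_iff hdG).2 ⟨e, Or.inl rfl⟩
      have hD' := (pebbled_drt hdG hdH htr hK (sl i 0)).1 hD
      obtain ⟨g, hg | hg⟩ := (isD_iff hdH).1 hD' <;> rw [hg]
      · obtain ⟨hc, ht⟩ := dec_spec_d0 (s := s) (g := g) (t := (j:ℕ)) (by omega)
        refine ⟨hc, ht, iff_of_false hshape ?_⟩
        rintro ⟨y, hy⟩
        rw [dec_d0 (by omega)] at hy
        exact sdv_inr_ne_inl hy
      · obtain ⟨hc, ht⟩ := dec_spec_d2 (s := s) (g := g) (t := (j:ℕ)) (by omega)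
        refine ⟨hc, ht, iff_of_false hshape ?_⟩
        rintro ⟨y, hy⟩
        rw [dec_d2 (by omega)] at hy
        exact sdv_inr_ne_inl hy
    · have hM : IsM (subdivision G 3) (enc v (sl i 0)) := by
        rw [enc_sl, hv, h1]
        exact (isM_iff hdG).2 ⟨e, rfl⟩
      have hM' := (pebbled_mid hdG hdH htr hK (sl i 0)).1 hM
      obtain ⟨g, hg⟩ := (isM_iff hdH).1 hM'
      rw [hg]
      obtain ⟨hc, ht⟩ := dec_spec_md (s := s) (g := g) (t := (j:ℕ)) (by omega)
      refine ⟨hc, ht, iff_of_false hshape ?_⟩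
      rintro ⟨y, hy⟩
      rw [dec_md (by omega)] at hy
      exact sdv_inr_ne_inl hy
    · have hD : IsD (subdivision G 3) (enc v (sl i 0)) := by
        rw [enc_sl, hv, h1]
        exact (isD_iff hdG).2 ⟨e, Or.inr rfl⟩
      have hD' := (pebbled_drt hdG hdH htr hK (sl i 0)).1 hD
      obtain ⟨g, hg | hg⟩ := (isD_iff hdH).1 hD' <;> rw [hg]
      · obtain ⟨hc, ht⟩ := dec_spec_d0 (s := s) (g := g) (t := s-1-(j:ℕ)) (by omega)
        refine ⟨hc, ht, iff_of_false hshape ?_⟩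
        rintro ⟨y, hy⟩
        rw [dec_d0 (by omega)] at hy
        exact sdv_inr_ne_inl hy
      · obtain ⟨hc, ht⟩ := dec_spec_d2 (s := s) (g := g) (t := s-1-(j:ℕ)) (by omega)
        refine ⟨hc, ht, iff_of_false hshape ?_⟩
        rintro ⟨y, hy⟩
        rw [dec_d2 (by omega)] at hy
        exact sdv_inr_ne_inl hy

include hdG hdH in
lemma edges_equiv {R : ℕ} {va : Fin (2*k) → SubdivVerts G 3} {wb : Fin (2*k) → SubdivVerts H 3}
    (hK : 0 < 2*k)
    (htr : wlEq (subdivision G 3) (subdivision H 3) (2*k) (R+3) va wb) :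
    Nonempty (SubEdges G ≃ SubEdges H) := by
  obtain ⟨b, hb⟩ := wlEq_step htr
  have hbrec : ∀ (u : SubdivVerts G 3) (ι : Fin (2*k)),
      wlEq (subdivision G 3) (subdivision H 3) (2*k) (R+2)
        (Function.update va ι u) (Function.update wb ι (b u)) := fun u ι => (hb u).2 ι
  have hmap : ∀ e : SubEdges G, ∃ g, b (md e) = md g :=
    fun e => val_mid' hdG hdH hbrec hK rfl e
  choose f hf using hmap
  refine ⟨Equiv.ofBijective f ⟨?_, ?_⟩⟩
  · intro e e' hee
    have : b (md e) = b (md e') := by rw [hf e, hf e', hee]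
    exact md_inj.1 (b.injective this)
  · intro g
    have hM : IsM (subdivision G 3) (b.symm (md g)) := by
      rw [val_mid hdG hdH hbrec hK rfl (b.symm (md g)), b.apply_symm_apply]
      exact (isM_iff hdH).2 ⟨g, rfl⟩
    obtain ⟨e, he⟩ := (isM_iff hdG).1 hM
    refine ⟨e, md_inj.1 ?_⟩
    rw [← hf e, ← he, b.apply_symm_apply]

lemma card_sdv_eq (h : Nat.card (SubEdges G) = Nat.card (SubEdges H)) :
    Nat.card (SubdivVerts G s) = Nat.card (SubdivVerts H s) := by
  unfold SubdivVerts
  rw [Nat.card_sum, Nat.card_sum, Nat.card_prod, Nat.card_prod, h]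

end MoreTransfer

section MainInduction

open Sum Function

variable {V : Type} [Fintype V] [LinearOrder V] {G H : SimpleGraph V} {k s : ℕ}
variable (hdG : ∀ v : V, 3 ≤ Set.ncard {w : V | G.Adj v w})
variable (hdH : ∀ v : V, 3 ≤ Set.ncard {w : V | H.Adj v w})

include hdG hdH in
lemma inv_to_wlEq (hk : 0 < k) :
    ∀ (r : ℕ) (v : Fin k → SubdivVerts G s) (w : Fin k → SubdivVerts H s),
      WLInv r v w → wlEq (subdivision G s) (subdivision H s) k r v w := by
  intro r
  induction r with
  | zero => exact fun v w hInv => wlEq_zero.2 hInv.1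
  | succ r ih =>
    intro v w hInv
    obtain ⟨hatp, htm, htr⟩ := hInv
    have hK : 0 < 2*k := by omega
    have htr' : wlEq (subdivision G 3) (subdivision H 3) (2*k) ((8*r+8)+7+1)
        (enc v) (enc w) := by
      have he : 8*(r+1)+8 = (8*r+8)+7+1 := by ring
      rwa [he] at htr
    obtain ⟨b, hb⟩ := wlEq_step htr'
    have hbeq : ∀ (u : SubdivVerts G 3) (ι : Fin (2*k)), (u = enc v ι ↔ b u = enc w ι) :=
      fun u ι => ((hb u).1 ι).1
    have hbadj : ∀ (u : SubdivVerts G 3) (ι : Fin (2*k)),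
        ((subdivision G 3).Adj u (enc v ι) ↔ (subdivision H 3).Adj (b u) (enc w ι)) :=
      fun u ι => ((hb u).1 ι).2
    have hbrec : ∀ (u : SubdivVerts G 3) (ι : Fin (2*k)),
        wlEq (subdivision G 3) (subdivision H 3) (2*k) ((8*r+8)+7)
          (Function.update (enc v) ι u) (Function.update (enc w) ι (b u)) :=
      fun u ι => (hb u).2 ι
    set BS : SubdivVerts G s → SubdivVerts H s :=
      fun u => dec (b (codeOf u)) (tOf u) with hBS
    have hspec : ∀ u, codeOf (BS u) = b (codeOf u) ∧ tOf (BS u) = tOf u ∧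
        ((∃ x, u = inl x) ↔ (∃ y, BS u = inl y)) :=
      fun u => bs_spec hdG hdH hk hbrec (r' := (8*r+8)+5) rfl u
    have hinj : Function.Injective BS := by
      intro u u' he
      refine code_t_inj (b.injective ?_) ?_
      · rw [← (hspec u).1, ← (hspec u').1, he]
      · rw [← (hspec u).2.1, ← (hspec u').2.1, he]
    have hcardE : Nat.card (SubEdges G) = Nat.card (SubEdges H) := by
      obtain ⟨eqv⟩ := edges_equiv hdG hdH hK
        (wlEq_mono (r := (8*r+8)+7+1) (r' := 0+3) (by omega) htr')
      exact Nat.card_congr eqv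
    have hbij : Function.Bijective BS :=
      (Nat.bijective_iff_injective_and_card BS).2 ⟨hinj, card_sdv_eq hcardE⟩
    have hrelE : ∀ (u : SubdivVerts G s) (i : Fin k), (u = v i ↔ BS u = w i) :=
      fun u i => relEq hdG hdH hk htm hbeq hbrec u i
    have hrelA : ∀ (u : SubdivVerts G s) (i : Fin k),
        ((subdivision G s).Adj u (v i) ↔ (subdivision H s).Adj (BS u) (w i)) :=
      fun u i => relAdj hdG hdH hk htm hbeq hbadj hbrec u i
    refine wlEq_succ.2 ⟨ih v w ⟨hatp, htm, wlEq_mono (by omega) htr⟩,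
      Equiv.ofBijective BS hbij, fun u => ⟨?_, ?_⟩⟩
    · -- atomic type of the extended tuples
      intro i j
      rw [Equiv.ofBijective_apply]
      refine Fin.lastCases ?_ (fun i' => ?_) i
      · refine Fin.lastCases ?_ (fun j' => ?_) j
        · simp only [Fin.snoc_last]
          refine ⟨by simp, ?_⟩
          exact iff_of_false ((subdivision G s).irrefl) ((subdivision H s).irrefl)
        · simp only [Fin.snoc_last, Fin.snoc_castSucc]
          exact ⟨hrelE u j', hrelA u j'⟩
      · refine Fin.lastCases ?_ (fun j' => ?_) j
        · simp only [Fin.snoc_last, Fin.snoc_castSucc]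
          refine ⟨eq_comm.trans ((hrelE u i').trans eq_comm), ?_⟩
          rw [(subdivision G s).adj_comm, (subdivision H s).adj_comm]
          exact hrelA u i'
        · simp only [Fin.snoc_castSucc]
          exact hatp i' j'
    · -- recursion
      intro i
      rw [Equiv.ofBijective_apply]
      refine ih _ _ ⟨?_, ?_, ?_⟩
      · intro i' j'
        by_cases hne1 : i' = i <;> by_cases hne2 : j' = i
        · rw [hne1, hne2, Function.update_self, Function.update_self]
          exact ⟨iff_of_true rfl rfl,
            iff_of_false ((subdivision G s).irrefl) ((subdivision H s).irrefl)⟩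
        · rw [hne1, Function.update_self, Function.update_self,
            Function.update_of_ne hne2, Function.update_of_ne hne2]
          exact ⟨hrelE u j', hrelA u j'⟩
        · rw [hne2, Function.update_self, Function.update_self,
            Function.update_of_ne hne1, Function.update_of_ne hne1]
          refine ⟨eq_comm.trans ((hrelE u i').trans eq_comm), ?_⟩
          rw [(subdivision G s).adj_comm, (subdivision H s).adj_comm]
          exact hrelA u i'
        · rw [Function.update_of_ne hne1, Function.update_of_ne hne1,
            Function.update_of_ne hne2, Function.update_of_ne hne2]
          exact hatp i' j'
      · intro i'
        by_cases hne : i' = i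
        · rw [hne, Function.update_self, Function.update_self]
          exact ((hspec u).2.1).symm
        · rw [Function.update_of_ne hne, Function.update_of_ne hne]
          exact htm i'
      · -- the encoded tuples after the update
        have h1 := hbrec (codeOf u) (sl i 0)
        obtain ⟨b₂, hb₂⟩ := wlEq_step h1
        have hpin : b₂ (codeOf u) = b (codeOf u) := by
          have h2 := ((hb₂ (codeOf u)).1 (sl i 0)).1
          rw [Function.update_self, Function.update_self] at h2
          exact h2.1 rfl
        have h3 := (hb₂ (codeOf u)).2 (sl i 1)
        rw [hpin] at h3
        rw [enc_update, enc_update, (hspec u).1]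
        exact wlEq_mono (by omega) h3
end MainInduction

section Final

open Sum Function

theorem wl_subdivision_transfer' {V : Type} [Fintype V] [LinearOrder V]
    (G H : SimpleGraph V) (s k : ℕ) (hk : 1 ≤ k)
    (hdG : ∀ v : V, 3 ≤ Set.ncard {w : V | G.Adj v w})
    (hdH : ∀ v : V, 3 ≤ Set.ncard {w : V | H.Adj v w})
    (h : WLIndistinguishable (subdivision G 3) (subdivision H 3) (2 * k)) :
    WLIndistinguishable (subdivision G s) (subdivision H s) k := by
  classical
  intro r
  have hk0 : 0 < k := hk
  have hK : 0 < 2*k := by omega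
  obtain ⟨F3, hF3⟩ := h ((8*r+8)+7+1)
  set W : (Fin k → SubdivVerts G s) → (Fin k → SubdivVerts H s) :=
    fun v => fun i => dec ((F3 (enc v)) (sl i 0)) (tOf (v i)) with hW
  have hspec : ∀ (v : Fin k → SubdivVerts G s) (i : Fin k),
      codeOf (W v i) = F3 (enc v) (sl i 0) ∧ tOf (W v i) = tOf (v i) ∧
      ((∃ x, v i = inl x) ↔ ∃ y, W v i = inl y) := by
    intro v i
    exact dec_pebbled_spec hdG hdH hk0 (R := (8*r+8)+6)
      (wlEq_mono (by omega) (hF3 (enc v))) i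
  have hencW : ∀ v, enc (W v) = F3 (enc v) := by
    intro v
    funext σ
    obtain ⟨c, hc⟩ := sl_blockOf σ
    rw [hc, enc_sl, (hspec v (blockOf σ)).1]
    rcases fin2_eq c with rfl | rfl
    · rfl
    · have hdbl := ((wlEq_atp (hF3 (enc v)) (sl (blockOf σ) 0) (sl (blockOf σ) 1)).1).1
      rw [enc_sl, enc_sl] at hdbl
      exact hdbl rfl
  have hWinv : ∀ v, WLInv r v (W v) := by
    intro v
    have htrW : wlEq (subdivision G 3) (subdivision H 3) (2*k) ((8*r+8)+7+1)
        (enc v) (enc (W v)) := by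
      rw [hencW v]
      exact hF3 (enc v)
    obtain ⟨b, hb⟩ := wlEq_step htrW
    have hbeq : ∀ (u : SubdivVerts G 3) (ι : Fin (2*k)),
        (u = enc v ι ↔ b u = enc (W v) ι) := fun u ι => ((hb u).1 ι).1
    have hbadj : ∀ (u : SubdivVerts G 3) (ι : Fin (2*k)),
        ((subdivision G 3).Adj u (enc v ι) ↔
          (subdivision H 3).Adj (b u) (enc (W v) ι)) := fun u ι => ((hb u).1 ι).2
    have hbrec : ∀ (u : SubdivVerts G 3) (ι : Fin (2*k)),
        wlEq (subdivision G 3) (subdivision H 3) (2*k) ((8*r+8)+7)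
          (Function.update (enc v) ι u) (Function.update (enc (W v)) ι (b u)) :=
      fun u ι => (hb u).2 ι
    have htm : ∀ i, tOf (v i) = tOf (W v i) := fun i => ((hspec v i).2.1).symm
    have hBSW : ∀ j, (dec (b (codeOf (v j))) (tOf (v j)) : SubdivVerts H s) = W v j := by
      intro j
      have hpin : b (codeOf (v j)) = codeOf (W v j) := by
        have h2 := hbeq (codeOf (v j)) (sl j 0)
        rw [enc_sl, enc_sl] at h2
        exact h2.1 rfl
      rw [hpin, htm j, dec_codeOf]
    refine ⟨?_, htm, ?_⟩
    · intro i j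
      constructor
      · have := relEq hdG hdH hk0 htm hbeq hbrec (v i) j
        rwa [hBSW i] at this
      · have := relAdj hdG hdH hk0 htm hbeq hbadj hbrec (v i) j
        rwa [hBSW i] at this
    · rw [hencW v]
      exact wlEq_mono (by omega) (hF3 (enc v))
  -- bijectivity of W
  have hinj : Function.Injective W := by
    intro v v' he
    have henc : enc v = enc v' := by
      refine F3.injective ?_
      rw [← hencW v, ← hencW v', he]
    funext i
    refine code_t_inj ?_ ?_
    · have h1 : enc v (sl i 0) = enc v' (sl i 0) := by rw [henc]
      rwa [enc_sl, enc_sl] at h1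
    · have h1 : tOf (W v i) = tOf (W v' i) := by rw [he]
      rwa [(hspec v i).2.1, (hspec v' i).2.1] at h1
  have hcardE : Nat.card (SubEdges G) = Nat.card (SubEdges H) := by
    by_cases hV : Nonempty V
    · obtain ⟨x₀⟩ := hV
      set v₀ : Fin k → SubdivVerts G s := fun _ => inl x₀
      obtain ⟨eqv⟩ := edges_equiv hdG hdH hK
        (wlEq_mono (r' := 0+3) (by omega) (hF3 (enc v₀)))
      exact Nat.card_congr eqv
    · have h1 : IsEmpty (SubEdges G) := ⟨fun e => hV ⟨e.1.1⟩⟩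
      have h2 : IsEmpty (SubEdges H) := ⟨fun e => hV ⟨e.1.1⟩⟩
      rw [Nat.card_of_isEmpty, Nat.card_of_isEmpty]
  have hbij : Function.Bijective W := by
    refine (Nat.bijective_iff_injective_and_card W).2 ⟨hinj, ?_⟩
    rw [Nat.card_fun, Nat.card_fun, card_sdv_eq hcardE]
  refine ⟨Equiv.ofBijective W hbij, fun v => ?_⟩
  rw [Equiv.ofBijective_apply]
  exact inv_to_wlEq hdG hdH hk0 r v (W v) (hWinv v)

end Final


/-- Let `G` and `H` be graphs on the same vertex set with minimum degree at least `3`.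
If `2k`-WL does not distinguish the 3-subdivisions `G³` and `H³`, then `k`-WL does not
distinguish the `s`-subdivisions `Gˢ` and `Hˢ`. -/
theorem wl_subdivision_transfer {V : Type} [Fintype V] [LinearOrder V]
    (G H : SimpleGraph V) (s k : ℕ) (hk : 1 ≤ k)
    (hdegG : ∀ v : V, 3 ≤ Set.ncard {w : V | G.Adj v w})
    (hdegH : ∀ v : V, 3 ≤ Set.ncard {w : V | H.Adj v w})
    (h : WLIndistinguishable (subdivision G 3) (subdivision H 3) (2 * k)) :
    WLIndistinguishable (subdivision G s) (subdivision H s) k :=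
  wl_subdivision_transfer' G H s k hk hdegG hdegH h
end

section
/- Let s, k ∈ ℕ with k ≥ 1 and let G and H be graphs on the same vertex set, each with minimum degree at least 3. If G ≡_{C_{8k}} H, then G^s ≡_{C_k} H^s. -/
/-- Formulas of the `k`-variable fragment of first-order logic with counting quantifiers,
over the language of graphs. `count n i φ` is the counting quantifier `∃^{≥n} x_i φ`. -/
inductive CFormula (k : ℕ) : Type
  | eq : Fin k → Fin k → CFormula k
  | adj : Fin k → Fin k → CFormula k
  | not : CFormula k → CFormula k
  | and : CFormula k → CFormula k → CFormula k
  | count : ℕ → Fin k → CFormula k → CFormula k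

/-- The free variables of a counting-logic formula. -/
def CFormula.freeVars {k : ℕ} : CFormula k → Finset (Fin k)
  | .eq i j => {i, j}
  | .adj i j => {i, j}
  | .not φ => φ.freeVars
  | .and φ ψ => φ.freeVars ∪ ψ.freeVars
  | .count _ i φ => φ.freeVars.erase i

/-- Satisfaction of a counting-logic formula in the graph `G` under the assignment `a`. -/
def CSat {V : Type} (G : SimpleGraph V) {k : ℕ} : CFormula k → (Fin k → V) → Prop
  | .eq i j, a => a i = a j
  | .adj i j, a => G.Adj (a i) (a j)
  | .not φ, a => ¬ CSat G φ a
  | .and φ ψ, a => CSat G φ a ∧ CSat G ψ a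
  | .count n i φ, a => n ≤ Set.ncard {u : V | CSat G φ (Function.update a i u)}

/-- `G ≡_{C_k} H` : the graphs `G` and `H` satisfy exactly the same sentences of the
`k`-variable fragment of first-order logic with counting. -/
def CEquiv {V W : Type} (G : SimpleGraph V) (H : SimpleGraph W) (k : ℕ) : Prop :=
  ∀ φ : CFormula k, φ.freeVars = ∅ →
    ((∀ a : Fin k → V, CSat G φ a) ↔ (∀ a : Fin k → W, CSat H φ a))

namespace CEquivSub

section Combinators

variable {m : ℕ}

def topF (x : Fin m) : CFormula m := .count 0 x (.eq x x)
def botF (x : Fin m) : CFormula m := .not (topF x)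
def orF (φ ψ : CFormula m) : CFormula m := .not (.and (.not φ) (.not ψ))
def OrListF (x : Fin m) (l : List (CFormula m)) : CFormula m := l.foldr orF (botF x)

def SumGE (x : Fin m) : List (ℕ → CFormula m) → ℕ → CFormula m
  | [], t => if t = 0 then topF x else botF x
  | F :: l, t => OrListF x ((List.range (t+1)).map fun r => .and (F r) (SumGE x l (t - r)))

def PairGE (x p q : Fin m) (t : ℕ) (ψ : CFormula m) : CFormula m :=
  SumGE x ((List.range t).map fun r m' => .count m' p (.count (r+1) q ψ)) t

variable {V : Type} {G : SimpleGraph V} {b : Fin m → V} {x : Fin m}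

lemma csat_top : CSat G (topF x) b := by simp [topF, CSat]

lemma csat_bot : ¬ CSat G (botF x) b := by simp [botF, topF, CSat]

lemma csat_orF {φ ψ : CFormula m} : CSat G (orF φ ψ) b ↔ CSat G φ b ∨ CSat G ψ b := by
  simp [orF, CSat]; tauto

lemma csat_orList {l : List (CFormula m)} :
    CSat G (OrListF x l) b ↔ ∃ φ ∈ l, CSat G φ b := by
  induction l with
  | nil => simp [OrListF]; exact csat_bot
  | cons ψ l ih =>
    simp only [OrListF, List.foldr] at *
    rw [csat_orF, ih]; simp

lemma csat_sumGE {ι : Type*} (l : List ι) (F : ι → ℕ → CFormula m) (c : ι → ℕ)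
    (hF : ∀ y ∈ l, ∀ t, (CSat G (F y t) b ↔ t ≤ c y)) (t : ℕ) :
    CSat G (SumGE x (l.map F) t) b ↔ t ≤ (l.map c).sum := by
  induction l generalizing t with
  | nil =>
    simp only [List.map_nil, SumGE, List.sum_nil]
    split
    · simp_all [csat_top]
    · simp only [csat_bot, false_iff]; omega
  | cons y l ih =>
    simp only [List.map_cons, SumGE, List.sum_cons]
    rw [csat_orList]
    constructor
    · rintro ⟨φ, hφ, hsat⟩
      simp only [List.mem_map, List.mem_range] at hφ
      obtain ⟨r, hr, rfl⟩ := hφ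
      obtain ⟨h1, h2⟩ := hsat
      rw [hF y (by simp) r] at h1
      rw [ih (fun z hz => hF z (by simp [hz]))] at h2
      omega
    · intro ht
      refine ⟨_, List.mem_map_of_mem (List.mem_range.2 (Nat.lt_succ_of_le (Nat.min_le_left t (c y)))), ?_⟩
      constructor
      · rw [hF y (by simp)]; omega
      · rw [ih (fun z hz => hF z (by simp [hz]))]; omega

end Combinators
end CEquivSub
namespace CEquivSub

section Counting

lemma ncard_sum_decomp {α β : Type*} [Finite α] [Finite β] (S : Set (α ⊕ β)) :
    S.ncard = (Sum.inl ⁻¹' S).ncard + (Sum.inr ⁻¹' S).ncard := by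
  have hS : S = Sum.inl '' (Sum.inl ⁻¹' S) ∪ Sum.inr '' (Sum.inr ⁻¹' S) := by
    ext x
    cases x <;> simp
  have hd : Disjoint (Sum.inl '' (Sum.inl ⁻¹' S) : Set (α ⊕ β)) (Sum.inr '' (Sum.inr ⁻¹' S)) := by
    rw [Set.disjoint_iff]
    rintro x ⟨⟨u, _, rfl⟩, ⟨w, _, h⟩⟩
    simp at h
  conv_lhs => rw [hS]
  rw [Set.ncard_union_eq hd (Set.toFinite _) (Set.toFinite _),
    Set.ncard_image_of_injective _ Sum.inl_injective,
    Set.ncard_image_of_injective _ Sum.inr_injective]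

lemma ncard_prod_eq_sum {α β : Type*} [Fintype α] [Finite β] (S : Set (α × β)) :
    S.ncard = ∑ u : α, Set.ncard {w : β | (u, w) ∈ S} := by
  classical
  have := Fintype.ofFinite β
  rw [Set.ncard_eq_toFinset_card' S]
  rw [Finset.card_eq_sum_card_fiberwise (f := Prod.fst) (t := Finset.univ)
    (fun x _ => Finset.mem_univ _)]
  refine Finset.sum_congr rfl fun u _ => ?_
  rw [Set.ncard_eq_toFinset_card' _]
  apply Finset.card_bij (fun p _ => p.2)
  · rintro ⟨u', w⟩ hp
    simp only [Finset.mem_filter, Set.mem_toFinset] at hp ⊢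
    obtain ⟨h1, h2⟩ := hp
    subst h2
    simpa using h1
  · rintro ⟨u1, w1⟩ h1 ⟨u2, w2⟩ h2 h
    simp only [Finset.mem_filter] at h1 h2
    simp only at h
    ext <;> simp [h, h1.2, h2.2]
  · intro w hw
    simp only [Set.mem_toFinset] at hw
    exact ⟨(u, w), by simpa using hw, rfl⟩

lemma ncard_prod_snd_eq_sum {α β : Type*} [Finite α] [Fintype β] (S : Set (α × β)) :
    S.ncard = ∑ w : β, Set.ncard {u : α | (u, w) ∈ S} := by
  have h : S.ncard = (Prod.swap '' S).ncard :=
    (Set.ncard_image_of_injective _ Prod.swap_injective).symm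
  rw [h, ncard_prod_eq_sum]
  refine Finset.sum_congr rfl fun w _ => ?_
  congr 1
  ext u
  simp only [Set.mem_setOf_eq, Set.mem_image]
  constructor
  · rintro ⟨⟨a, c⟩, hmem, heq⟩
    have h1 : c = w := congrArg Prod.fst heq
    have h2 : a = u := congrArg Prod.snd heq
    subst h1; subst h2; exact hmem
  · intro hm; exact ⟨(u, w), hm, rfl⟩

lemma list_range_map_sum (f : ℕ → ℕ) (t : ℕ) :
    ((List.range t).map f).sum = ∑ r ∈ Finset.range t, f r := by
  induction t with
  | zero => simp
  | succ n ih => simp [List.range_succ, Finset.sum_range_succ, ih]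

lemma filter_range_min (c t : ℕ) :
    (Finset.range t).filter (fun r => r + 1 ≤ c) = Finset.range (min c t) := by
  ext r; simp; omega

lemma sum_thresh {α : Type*} [Fintype α] (f : α → ℕ) (t : ℕ) :
    (t ≤ ∑ r ∈ Finset.range t, Set.ncard {u : α | r + 1 ≤ f u}) ↔ t ≤ ∑ u : α, f u := by
  classical
  have key : ∑ r ∈ Finset.range t, Set.ncard {u : α | r + 1 ≤ f u}
      = ∑ u : α, min (f u) t := by
    have : ∀ r, Set.ncard {u : α | r + 1 ≤ f u}
        = (Finset.univ.filter (fun u => r + 1 ≤ f u)).card := by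
      intro r
      rw [Set.ncard_eq_toFinset_card']
      congr 1
      ext u; simp
    simp only [this, Finset.card_filter]
    rw [Finset.sum_comm]
    refine Finset.sum_congr rfl fun u _ => ?_
    rw [← Finset.card_filter, filter_range_min, Finset.card_range]
  rw [key]
  constructor
  · intro h
    exact h.trans (Finset.sum_le_sum fun u _ => Nat.min_le_left _ _)
  · intro h
    by_cases hc : ∃ u, t ≤ f u
    · obtain ⟨u, hu⟩ := hc
      calc t = min (f u) t := by omega
        _ ≤ _ := Finset.single_le_sum (f := fun u => min (f u) t)
            (fun _ _ => Nat.zero_le _) (Finset.mem_univ u)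
    · push_neg at hc
      have : ∑ u : α, min (f u) t = ∑ u : α, f u :=
        Finset.sum_congr rfl fun u _ => by have := hc u; omega
      omega

variable {m : ℕ} {V : Type} [Fintype V] {G : SimpleGraph V}

lemma csat_pairGE {x p q : Fin m} (hpq : p ≠ q) (ψ : CFormula m) (b : Fin m → V) (t : ℕ) :
    CSat G (PairGE x p q t ψ) b ↔
      t ≤ Set.ncard {pr : V × V |
        CSat G ψ (Function.update (Function.update b p pr.1) q pr.2)} := by
  classical
  rw [PairGE, csat_sumGE (List.range t) _
    (fun r => Set.ncard {u : V | CSat G (CFormula.count (r+1) q ψ) (Function.update b p u)})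
    (fun r _ t' => by simp [CSat]) t]
  rw [list_range_map_sum]
  have hg : ∀ r : ℕ, Set.ncard {u : V | CSat G (CFormula.count (r+1) q ψ) (Function.update b p u)}
      = Set.ncard {u : V | r + 1 ≤
          Set.ncard {w : V | CSat G ψ (Function.update (Function.update b p u) q w)}} := by
    intro r
    congr 1
  simp only [hg]
  rw [sum_thresh (fun u =>
    Set.ncard {w : V | CSat G ψ (Function.update (Function.update b p u) q w)}) t]
  rw [ncard_prod_eq_sum {pr : V × V |
        CSat G ψ (Function.update (Function.update b p pr.1) q pr.2)}]
  exact Iff.rfl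

end Counting
end CEquivSub
namespace CEquivSub

section Rep

variable {V : Type} [LinearOrder V] {G : SimpleGraph V} {s : ℕ}

lemma cross_false {a b c d : V} (h1 : a < b) (h2 : c < d) (h3 : a = d) (h4 : b = c) :
    False :=
  lt_irrefl c (((h2.trans_eq h3.symm).trans h1).trans_eq h4)

/-- `(u, w, j)` is an (oriented) representation of the internal vertex `x`. -/
def Rep (G : SimpleGraph V) (s : ℕ) (u w : V) (j : ℕ) (x : SubdivVerts G s) : Prop :=
  ∃ (e : SubEdges G) (j' : Fin s), x = Sum.inr (e, j') ∧
    ((u = e.1.1 ∧ w = e.1.2 ∧ j = (j' : ℕ)) ∨ (u = e.1.2 ∧ w = e.1.1 ∧ j + (j' : ℕ) + 1 = s))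

lemma Rep.adj {u w : V} {j : ℕ} {x : SubdivVerts G s} (h : Rep G s u w j x) : G.Adj u w := by
  obtain ⟨e, j', rfl, (⟨rfl, rfl, _⟩ | ⟨rfl, rfl, _⟩)⟩ := h
  · exact e.2.2
  · exact e.2.2.symm

lemma Rep.lt_s {u w : V} {j : ℕ} {x : SubdivVerts G s} (h : Rep G s u w j x) : j < s := by
  obtain ⟨e, j', rfl, (⟨rfl, rfl, rfl⟩ | ⟨rfl, rfl, hj⟩)⟩ := h
  · exact j'.2
  · omega

lemma rep_eq_iff {u w u' w' : V} {j j' : ℕ} {x y : SubdivVerts G s}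
    (h1 : Rep G s u w j x) (h2 : Rep G s u' w' j' y) :
    x = y ↔ ((u = u' ∧ w = w' ∧ j = j') ∨ (u = w' ∧ w = u' ∧ j + j' + 1 = s)) := by
  obtain ⟨e, je, rfl, hc1⟩ := h1
  obtain ⟨f, jf, rfl, hc2⟩ := h2
  have hlt : e.1.1 < e.1.2 := e.2.1
  have hlt' : f.1.1 < f.1.2 := f.2.1
  have hjs : (je : ℕ) < s := je.2
  have hjs' : (jf : ℕ) < s := jf.2
  have hxy : (Sum.inr (e, je) : SubdivVerts G s) = Sum.inr (f, jf) ↔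
      (e.1.1 = f.1.1 ∧ e.1.2 = f.1.2 ∧ (je : ℕ) = (jf : ℕ)) := by
    constructor
    · intro h
      have h' : (e, je) = (f, jf) := Sum.inr_injective h
      have he : e = f := congrArg Prod.fst h'
      have hj : je = jf := congrArg Prod.snd h'
      subst he; subst hj
      exact ⟨rfl, rfl, rfl⟩
    · rintro ⟨h1, h2, h3⟩
      have he : e = f := Subtype.ext (Prod.ext h1 h2)
      have hj : je = jf := Fin.ext h3
      rw [he, hj]
  refine Iff.trans hxy ?_
  rcases hc1 with ⟨rfl, rfl, hj1⟩ | ⟨rfl, rfl, hj1⟩ <;>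
    rcases hc2 with ⟨rfl, rfl, hj2⟩ | ⟨rfl, rfl, hj2⟩
  · constructor
    · rintro ⟨ha, hb, hc⟩; exact Or.inl ⟨ha, hb, by omega⟩
    · rintro (⟨ha, hb, hc⟩ | ⟨ha, hb, hc⟩)
      · exact ⟨ha, hb, by omega⟩
      · exact (cross_false hlt hlt' ha hb).elim
  · constructor
    · rintro ⟨ha, hb, hc⟩; exact Or.inr ⟨ha, hb, by omega⟩
    · rintro (⟨ha, hb, hc⟩ | ⟨ha, hb, hc⟩)
      · exact (cross_false hlt hlt' ha hb).elim
      · exact ⟨ha, hb, by omega⟩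
  · constructor
    · rintro ⟨ha, hb, hc⟩; exact Or.inr ⟨hb, ha, by omega⟩
    · rintro (⟨ha, hb, hc⟩ | ⟨ha, hb, hc⟩)
      · exact (cross_false hlt hlt' hb ha).elim
      · exact ⟨hb, ha, by omega⟩
  · constructor
    · rintro ⟨ha, hb, hc⟩; exact Or.inl ⟨hb, ha, by omega⟩
    · rintro (⟨ha, hb, hc⟩ | ⟨ha, hb, hc⟩)
      · exact ⟨hb, ha, by omega⟩
      · exact (cross_false hlt hlt' hb ha).elim

lemma subdiv_adj_inl_inl {v v' : V} :
    (subdivision G s).Adj (Sum.inl v) (Sum.inl v') ↔ s = 0 ∧ G.Adj v v' := by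
  constructor
  · rintro ⟨hne, (⟨h1, h2⟩ | ⟨h1, h2⟩)⟩
    · exact ⟨h1, h2⟩
    · exact ⟨h1, h2.symm⟩
  · rintro ⟨rfl, h⟩
    exact ⟨fun hh => h.ne (Sum.inl_injective hh), Or.inl ⟨rfl, h⟩⟩

lemma subdiv_adj_inl_rep {v u w : V} {j : ℕ} {x : SubdivVerts G s}
    (h : Rep G s u w j x) :
    (subdivision G s).Adj (Sum.inl v) x ↔ (v = u ∧ j = 0) ∨ (v = w ∧ j + 1 = s) := by
  obtain ⟨e, je, rfl, hc⟩ := h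
  have hjs : (je : ℕ) < s := je.2
  have base : (subdivision G s).Adj (Sum.inl v) (Sum.inr (e, je)) ↔
      ((v = e.1.1 ∧ (je : ℕ) = 0) ∨ (v = e.1.2 ∧ (je : ℕ) = s - 1)) := by
    constructor
    · rintro ⟨hne, (h | h)⟩
      · exact h
      · exact h.elim
    · intro h
      exact ⟨Sum.inl_ne_inr, Or.inl h⟩
  rw [base]
  rcases hc with ⟨rfl, rfl, hj⟩ | ⟨rfl, rfl, hj⟩ <;>
    constructor <;> rintro (⟨rfl, h⟩ | ⟨rfl, h⟩) <;>
    first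
      | exact Or.inl ⟨rfl, by omega⟩
      | exact Or.inr ⟨rfl, by omega⟩

lemma subdiv_adj_rep_rep {u w u' w' : V} {j j' : ℕ} {x y : SubdivVerts G s}
    (h1 : Rep G s u w j x) (h2 : Rep G s u' w' j' y) :
    (subdivision G s).Adj x y ↔
      ((u = u' ∧ w = w' ∧ (j + 1 = j' ∨ j' + 1 = j)) ∨
       (u = w' ∧ w = u' ∧ (j + j' + 2 = s ∨ j + j' = s))) := by
  obtain ⟨e, je, rfl, hc1⟩ := h1
  obtain ⟨f, jf, rfl, hc2⟩ := h2
  have hlt : e.1.1 < e.1.2 := e.2.1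
  have hlt' : f.1.1 < f.1.2 := f.2.1
  have hjs : (je : ℕ) < s := je.2
  have hjs' : (jf : ℕ) < s := jf.2
  have base : (subdivision G s).Adj (Sum.inr (e, je)) (Sum.inr (f, jf)) ↔
      ((e.1.1 = f.1.1 ∧ e.1.2 = f.1.2) ∧ ((je : ℕ) + 1 = (jf : ℕ) ∨ (jf : ℕ) + 1 = (je : ℕ))) := by
    constructor
    · rintro ⟨hne, (⟨h1, h2⟩ | ⟨h1, h2⟩)⟩
      · exact ⟨by rw [h1]; exact ⟨rfl, rfl⟩, Or.inl h2⟩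
      · exact ⟨by rw [h1]; exact ⟨rfl, rfl⟩, Or.inr h2⟩
    · rintro ⟨⟨ha, hb⟩, hor⟩
      have hef : e = f := Subtype.ext (Prod.ext ha hb)
      subst hef
      refine ⟨fun heq => ?_, ?_⟩
      · have h' : je = jf := congrArg Prod.snd (Sum.inr_injective heq)
        have := congrArg Fin.val h'
        omega
      · rcases hor with h | h
        · exact Or.inl ⟨rfl, h⟩
        · exact Or.inr ⟨rfl, h⟩
  rw [base]
  rcases hc1 with ⟨rfl, rfl, hj1⟩ | ⟨rfl, rfl, hj1⟩ <;>
    rcases hc2 with ⟨rfl, rfl, hj2⟩ | ⟨rfl, rfl, hj2⟩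
  · constructor
    · rintro ⟨⟨ha, hb⟩, hor⟩; exact Or.inl ⟨ha, hb, by omega⟩
    · rintro (⟨ha, hb, hor⟩ | ⟨ha, hb, hor⟩)
      · exact ⟨⟨ha, hb⟩, by omega⟩
      · exact (cross_false hlt hlt' ha hb).elim
  · constructor
    · rintro ⟨⟨ha, hb⟩, hor⟩; exact Or.inr ⟨ha, hb, by omega⟩
    · rintro (⟨ha, hb, hor⟩ | ⟨ha, hb, hor⟩)
      · exact (cross_false hlt hlt' ha hb).elim
      · exact ⟨⟨ha, hb⟩, by omega⟩
  · constructor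
    · rintro ⟨⟨ha, hb⟩, hor⟩; exact Or.inr ⟨hb, ha, by omega⟩
    · rintro (⟨ha, hb, hor⟩ | ⟨ha, hb, hor⟩)
      · exact (cross_false hlt hlt' hb ha).elim
      · exact ⟨⟨hb, ha⟩, by omega⟩
  · constructor
    · rintro ⟨⟨ha, hb⟩, hor⟩; exact Or.inl ⟨hb, ha, by omega⟩
    · rintro (⟨ha, hb, hor⟩ | ⟨ha, hb, hor⟩)
      · exact ⟨⟨hb, ha⟩, by omega⟩
      · exact (cross_false hlt hlt' hb ha).elim

end Rep
end CEquivSub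
namespace CEquivSub

section Translation

variable {k s : ℕ} {V : Type} [LinearOrder V] {G : SimpleGraph V}

def v0 {k : ℕ} (i : Fin k) : Fin (8*k) := ⟨2*i.1, by have := i.2; omega⟩
def v1 {k : ℕ} (i : Fin k) : Fin (8*k) := ⟨2*i.1+1, by have := i.2; omega⟩

lemma v0_ne_v1 {i i' : Fin k} : v0 i ≠ v1 i' := by
  simp [v0, v1, Fin.ext_iff]; omega

lemma v0_ne_v0 {i i' : Fin k} (h : i ≠ i') : v0 i ≠ v0 i' := fun hh =>
  h (Fin.ext (by have := congrArg Fin.val hh; simp only [v0] at this; omega))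

lemma v1_ne_v1 {i i' : Fin k} (h : i ≠ i') : v1 i ≠ v1 i' := fun hh =>
  h (Fin.ext (by have := congrArg Fin.val hh; simp only [v1] at this; omega))

lemma v1_ne_v0 {i i' : Fin k} : v1 i ≠ v0 i' := fun h => v0_ne_v1 h.symm

/-- Translation of an equality atom. -/
def trEq (s : ℕ) {k : ℕ} (i i' : Fin k) : Option (Fin s) → Option (Fin s) → CFormula (8*k)
  | none, none => .eq (v0 i) (v0 i')
  | some j, some j' =>
      orF (if (j : ℕ) = (j' : ℕ) then
             .and (.eq (v0 i) (v0 i')) (.eq (v1 i) (v1 i')) else botF (v0 i))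
          (if (j : ℕ) + (j' : ℕ) + 1 = s then
             .and (.eq (v0 i) (v1 i')) (.eq (v1 i) (v0 i')) else botF (v0 i))
  | _, _ => botF (v0 i)

/-- Translation of an adjacency atom. -/
def trAdj (s : ℕ) {k : ℕ} (i i' : Fin k) : Option (Fin s) → Option (Fin s) → CFormula (8*k)
  | none, none => if s = 0 then .adj (v0 i) (v0 i') else botF (v0 i)
  | none, some j' =>
      orF (if (j' : ℕ) = 0 then .eq (v0 i) (v0 i') else botF (v0 i))
          (if (j' : ℕ) + 1 = s then .eq (v0 i) (v1 i') else botF (v0 i))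
  | some j, none =>
      orF (if (j : ℕ) = 0 then .eq (v0 i') (v0 i) else botF (v0 i))
          (if (j : ℕ) + 1 = s then .eq (v0 i') (v1 i) else botF (v0 i))
  | some j, some j' =>
      orF (if (j : ℕ) + 1 = (j' : ℕ) ∨ (j' : ℕ) + 1 = (j : ℕ) then
             .and (.eq (v0 i) (v0 i')) (.eq (v1 i) (v1 i')) else botF (v0 i))
          (if (j : ℕ) + (j' : ℕ) + 2 = s ∨ (j : ℕ) + (j' : ℕ) = s then
             .and (.eq (v0 i) (v1 i')) (.eq (v1 i) (v0 i')) else botF (v0 i))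

/-- The translation of a `k`-variable counting formula about `Gˢ` into an `8k`-variable
counting formula about `G`. -/
def Tr (s : ℕ) {k : ℕ} (σ : Fin k → Option (Fin s)) : CFormula k → CFormula (8*k)
  | .eq i i' => trEq s i i' (σ i) (σ i')
  | .adj i i' => trAdj s i i' (σ i) (σ i')
  | .not φ => .not (Tr s σ φ)
  | .and φ ψ => .and (Tr s σ φ) (Tr s σ ψ)
  | .count n i φ =>
      OrListF (v0 i) ((List.range (n+1)).map fun n1 =>
        .and (.count n1 (v0 i) (Tr s (Function.update σ i none) φ))
          (SumGE (v0 i) ((List.finRange s).map fun j t =>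
              PairGE (v0 i) (v0 i) (v1 i) t
                (.and (.adj (v0 i) (v1 i)) (Tr s (Function.update σ i (some j)) φ)))
            (2*(n - n1))))

/-- How a single variable of the subdivision is encoded by two base variables. -/
def EncAt (G : SimpleGraph V) (s : ℕ) :
    Option (Fin s) → SubdivVerts G s → V → V → Prop
  | none, x, u, _ => x = Sum.inl u
  | some j, x, u, w => Rep G s u w (j : ℕ) x

/-- The assignment `b` encodes the assignment `a` (with shape `σ`). -/
def Enc (G : SimpleGraph V) (s : ℕ) (σ : Fin k → Option (Fin s))
    (a : Fin k → SubdivVerts G s) (b : Fin (8*k) → V) : Prop :=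
  ∀ i : Fin k, EncAt G s (σ i) (a i) (b (v0 i)) (b (v1 i))

lemma enc_update_none {σ : Fin k → Option (Fin s)} {a b}
    (h : Enc G s σ a b) (i : Fin k) (v : V) :
    Enc G s (Function.update σ i none) (Function.update a i (Sum.inl v))
      (Function.update b (v0 i) v) := by
  intro i'
  rcases eq_or_ne i' i with heq | hne
  · rw [heq]
    simp [Function.update_self, EncAt]
    exact Function.update_self _ _ _
  · have h1 : Function.update σ i none i' = σ i' := Function.update_of_ne hne _ _
    have h2 : Function.update a i (Sum.inl v) i' = a i' := Function.update_of_ne hne _ _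
    have h3 : Function.update b (v0 i) v (v0 i') = b (v0 i') :=
      Function.update_of_ne (v0_ne_v0 (Ne.symm hne)).symm _ _
    have h4 : Function.update b (v0 i) v (v1 i') = b (v1 i') :=
      Function.update_of_ne v1_ne_v0.symm.symm _ _
    rw [h1, h2, h3, h4]
    exact h i'

lemma enc_update_some {σ : Fin k → Option (Fin s)} {a b}
    (h : Enc G s σ a b) (i : Fin k) (j : Fin s) {u w : V} {x : SubdivVerts G s}
    (hx : Rep G s u w (j : ℕ) x) :
    Enc G s (Function.update σ i (some j)) (Function.update a i x)
      (Function.update (Function.update b (v0 i) u) (v1 i) w) := by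
  intro i'
  rcases eq_or_ne i' i with heq | hne
  · rw [heq]
    have h1 : Function.update (Function.update b (v0 i) u) (v1 i) w (v0 i) = u := by
      rw [Function.update_of_ne v0_ne_v1, Function.update_self]
    have h2 : Function.update (Function.update b (v0 i) u) (v1 i) w (v1 i) = w :=
      Function.update_self _ _ _
    simp only [Function.update_self, h1, h2, EncAt]
    exact hx
  · have h1 : Function.update σ i (some j) i' = σ i' := Function.update_of_ne hne _ _
    have h2 : Function.update a i x i' = a i' := Function.update_of_ne hne _ _
    have h3 : Function.update (Function.update b (v0 i) u) (v1 i) w (v0 i') = b (v0 i') := by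
      rw [Function.update_of_ne v0_ne_v1.symm.symm, Function.update_of_ne (v0_ne_v0 (Ne.symm hne)).symm]
    have h4 : Function.update (Function.update b (v0 i) u) (v1 i) w (v1 i') = b (v1 i') := by
      rw [Function.update_of_ne (v1_ne_v1 (Ne.symm hne)).symm, Function.update_of_ne v1_ne_v0.symm.symm]
    rw [h1, h2, h3, h4]
    exact h i'

/-- The internal vertex represented by `(u, w, j)`. -/
def xvert (G : SimpleGraph V) (s : ℕ) (u w : V) (h : G.Adj u w) (j : ℕ) (hj : j < s) :
    SubdivVerts G s :=
  if hlt : u < w then Sum.inr (⟨(u, w), hlt, h⟩, ⟨j, hj⟩)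
  else Sum.inr (⟨(w, u), (h.ne.lt_or_gt.resolve_left hlt), h.symm⟩, ⟨s-1-j, by omega⟩)

lemma xvert_rep {u w : V} (h : G.Adj u w) {j : ℕ} (hj : j < s) :
    Rep G s u w j (xvert G s u w h j hj) := by
  rw [xvert]
  split_ifs with hlt
  · exact ⟨⟨(u, w), hlt, h⟩, ⟨j, hj⟩, dif_pos hlt, Or.inl ⟨rfl, rfl, rfl⟩⟩
  · exact ⟨⟨(w, u), h.ne.lt_or_gt.resolve_left hlt, h.symm⟩, ⟨s-1-j, by omega⟩, dif_neg hlt, Or.inr ⟨rfl, rfl, (show j + (s-1-j) + 1 = s by omega)⟩⟩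

end Translation
end CEquivSub
namespace CEquivSub

section Main

variable {V : Type} [Fintype V] [LinearOrder V]

instance {G : SimpleGraph V} : Finite (SubEdges G) := by
  unfold SubEdges; infer_instance

instance {G : SimpleGraph V} {s : ℕ} : Finite (SubdivVerts G s) := by
  unfold SubdivVerts; infer_instance

lemma tr_correct (G : SimpleGraph V) {k s : ℕ} (φ : CFormula k) :
    ∀ (σ : Fin k → Option (Fin s)) (a : Fin k → SubdivVerts G s) (b : Fin (8*k) → V),
      Enc G s σ a b → (CSat (subdivision G s) φ a ↔ CSat G (Tr s σ φ) b) := by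
  induction φ with
  | eq i i' =>
    intro σ a b henc
    have hi := henc i
    have hi' := henc i'
    have hL : CSat (subdivision G s) (CFormula.eq i i') a ↔ (a i = a i') := Iff.rfl
    rcases hσ1 : σ i with _ | j <;> rcases hσ2 : σ i' with _ | j' <;>
      rw [hσ1] at hi <;> rw [hσ2] at hi' <;>
      simp only [EncAt] at hi hi' <;>
      simp only [Tr, trEq, hσ1, hσ2] <;> rw [hL]
    · rw [hi, hi']
      exact ⟨fun h => Sum.inl_injective h, fun h => congrArg Sum.inl h⟩
    · obtain ⟨e, je, hxe, -⟩ := hi'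
      refine iff_of_false ?_ csat_bot
      rw [hi, hxe]
      simp
    · obtain ⟨e, je, hxe, -⟩ := hi
      refine iff_of_false ?_ csat_bot
      rw [hi', hxe]
      simp
    · rw [rep_eq_iff hi hi', csat_orF]
      split_ifs with h1 h2 h2 <;> simp [CSat, csat_bot] <;> tauto
  | adj i i' =>
    intro σ a b henc
    have hi := henc i
    have hi' := henc i'
    have hA : CSat (subdivision G s) (CFormula.adj i i') a ↔
        (subdivision G s).Adj (a i) (a i') := Iff.rfl
    rcases hσ1 : σ i with _ | j <;> rcases hσ2 : σ i' with _ | j' <;>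
      rw [hσ1] at hi <;> rw [hσ2] at hi' <;>
      simp only [EncAt] at hi hi' <;>
      simp only [Tr, trAdj, hσ1, hσ2] <;> rw [hA]
    · rw [hi, hi', subdiv_adj_inl_inl]
      split_ifs with hs
      · subst hs; simp [CSat]
      · exact iff_of_false (fun hh => hs hh.1) csat_bot
    · rw [hi, subdiv_adj_inl_rep hi', csat_orF]
      split_ifs with h1 h2 h2 <;> simp [CSat, csat_bot] <;> tauto
    · rw [(subdivision G s).adj_comm, hi', subdiv_adj_inl_rep hi, csat_orF]
      split_ifs with h1 h2 h2 <;> simp [CSat, csat_bot] <;> tauto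
    · rw [subdiv_adj_rep_rep hi hi', csat_orF]
      split_ifs with h1 h2 h2 <;> simp [CSat, csat_bot] <;> tauto
  | not φ ih =>
    intro σ a b henc
    simp only [CSat, Tr]
    rw [ih σ a b henc]
  | and φ ψ ihφ ihψ =>
    intro σ a b henc
    simp only [CSat, Tr]
    rw [ihφ σ a b henc, ihψ σ a b henc]
  | count n i φ ih =>
    intro σ a b henc
    classical
    simp only [CSat, Tr]
    set SO : Set V := {v | CSat (subdivision G s) φ (Function.update a i (Sum.inl v))}
      with hSOdef
    set SI : Set (SubEdges G × Fin s) :=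
      {x | CSat (subdivision G s) φ (Function.update a i (Sum.inr x))} with hSIdef
    have hdecomp :
        Set.ncard {u | CSat (subdivision G s) φ (Function.update a i u)}
          = SO.ncard + SI.ncard := by
      have := ncard_sum_decomp (α := V) (β := SubEdges G × Fin s)
        {u | CSat (subdivision G s) φ (Function.update a i u)}
      exact this
    have hSOcard : SO.ncard = Set.ncard
        {v | CSat G (Tr s (Function.update σ i none) φ) (Function.update b (v0 i) v)} := by
      congr 1
      ext v
      exact ih _ _ _ (enc_update_none henc i v)
    set D : Fin s → Set (V × V) := fun j =>
      {pr | CSat G (CFormula.and (.adj (v0 i) (v1 i)) (Tr s (Function.update σ i (some j)) φ))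
        (Function.update (Function.update b (v0 i) pr.1) (v1 i) pr.2)} with hDdef
    have hupd0 : ∀ u w : V,
        Function.update (Function.update b (v0 i) u) (v1 i) w (v0 i) = u := by
      intro u w
      rw [Function.update_of_ne v0_ne_v1, Function.update_self]
    have hupd1 : ∀ u w : V,
        Function.update (Function.update b (v0 i) u) (v1 i) w (v1 i) = w := by
      intro u w
      rw [Function.update_self]
    have hmemD : ∀ (j : Fin s) (u w : V) (x : SubdivVerts G s), Rep G s u w (j : ℕ) x →
        ((u, w) ∈ D j ↔ CSat (subdivision G s) φ (Function.update a i x)) := by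
      intro j u w x hx
      have hadj : G.Adj u w := hx.adj
      have : (u, w) ∈ D j ↔ (G.Adj u w ∧
          CSat G (Tr s (Function.update σ i (some j)) φ)
            (Function.update (Function.update b (v0 i) u) (v1 i) w)) := by
        simp only [hDdef, Set.mem_setOf_eq, CSat, hupd0, hupd1]
      rw [this, ih _ _ _ (enc_update_some henc i j hx)]
      simp [hadj]
    set Sl : Fin s → Set (SubEdges G) := fun j => {e | (e, j) ∈ SI} with hSldef
    have hDcard : ∀ j : Fin s, (D j).ncard = (Sl j).ncard + (Sl (Fin.rev j)).ncard := by
      intro j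
      have hrev : (j : ℕ) + (Fin.rev j : ℕ) + 1 = s := by
        rw [Fin.val_rev]
        have := j.2
        omega
      have himg : D j = (fun e : SubEdges G => (e.1.1, e.1.2)) '' (Sl j) ∪
          (fun e : SubEdges G => (e.1.2, e.1.1)) '' (Sl (Fin.rev j)) := by
        ext ⟨u, w⟩
        constructor
        · intro hm
          have hadj : G.Adj u w := by
            have : CSat G (CFormula.and (.adj (v0 i) (v1 i))
                (Tr s (Function.update σ i (some j)) φ))
                (Function.update (Function.update b (v0 i) u) (v1 i) w) := hm
            have h1 := this.1
            simpa only [CSat, hupd0, hupd1] using h1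
          rcases hadj.ne.lt_or_gt with hlt | hlt
          · left
            refine ⟨⟨(u, w), hlt, hadj⟩, ?_, rfl⟩
            have hx : Rep G s u w (j : ℕ) (Sum.inr (⟨(u, w), hlt, hadj⟩, j)) :=
              ⟨_, j, rfl, Or.inl ⟨rfl, rfl, rfl⟩⟩
            exact (hmemD j u w _ hx).mp hm
          · right
            refine ⟨⟨(w, u), hlt, hadj.symm⟩, ?_, rfl⟩
            have hx : Rep G s u w (j : ℕ) (Sum.inr (⟨(w, u), hlt, hadj.symm⟩, Fin.rev j)) :=
              ⟨_, Fin.rev j, rfl, Or.inr ⟨rfl, rfl, hrev⟩⟩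
            exact (hmemD j u w _ hx).mp hm
        · rintro (⟨e, he, heq⟩ | ⟨e, he, heq⟩)
          · rw [← heq]
            have hx : Rep G s e.1.1 e.1.2 (j : ℕ) (Sum.inr (e, j)) :=
              ⟨e, j, rfl, Or.inl ⟨rfl, rfl, rfl⟩⟩
            exact (hmemD j e.1.1 e.1.2 _ hx).mpr he
          · rw [← heq]
            have hx : Rep G s e.1.2 e.1.1 (j : ℕ) (Sum.inr (e, Fin.rev j)) :=
              ⟨e, Fin.rev j, rfl, Or.inr ⟨rfl, rfl, hrev⟩⟩
            exact (hmemD j e.1.2 e.1.1 _ hx).mpr he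
      have hinj1 : Function.Injective (fun e : SubEdges G => (e.1.1, e.1.2)) := by
        intro e f h
        have h1 : e.1.1 = f.1.1 := congrArg Prod.fst h
        have h2 : e.1.2 = f.1.2 := congrArg Prod.snd h
        exact Subtype.ext (Prod.ext h1 h2)
      have hinj2 : Function.Injective (fun e : SubEdges G => (e.1.2, e.1.1)) := by
        intro e f h
        have h1 : e.1.2 = f.1.2 := congrArg Prod.fst h
        have h2 : e.1.1 = f.1.1 := congrArg Prod.snd h
        exact Subtype.ext (Prod.ext h2 h1)
      have hdisj : Disjoint ((fun e : SubEdges G => (e.1.1, e.1.2)) '' (Sl j))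
          ((fun e : SubEdges G => (e.1.2, e.1.1)) '' (Sl (Fin.rev j))) := by
        rw [Set.disjoint_iff]
        rintro pr ⟨⟨e, -, he⟩, ⟨f, -, hf⟩⟩
        have h1 : e.1.1 = f.1.2 := by rw [← hf] at he; exact congrArg Prod.fst he
        have h2 : e.1.2 = f.1.1 := by rw [← hf] at he; exact congrArg Prod.snd he
        exact (cross_false e.2.1 f.2.1 h1 h2).elim
      rw [himg, Set.ncard_union_eq hdisj (Set.toFinite _) (Set.toFinite _),
        Set.ncard_image_of_injective _ hinj1, Set.ncard_image_of_injective _ hinj2]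
    have hSIcard : SI.ncard = ∑ j : Fin s, (Sl j).ncard := ncard_prod_snd_eq_sum SI
    have hsumD : ∑ j : Fin s, (D j).ncard = 2 * SI.ncard := by
      have h1 : ∑ j : Fin s, (Sl (Fin.rev j)).ncard = ∑ j : Fin s, (Sl j).ncard :=
        Fintype.sum_bijective Fin.rev Fin.rev_bijective _ _ (fun j => rfl)
      calc ∑ j : Fin s, (D j).ncard
          = ∑ j : Fin s, ((Sl j).ncard + (Sl (Fin.rev j)).ncard) :=
            Finset.sum_congr rfl (fun j _ => hDcard j)
        _ = ∑ j : Fin s, (Sl j).ncard + ∑ j : Fin s, (Sl (Fin.rev j)).ncard :=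
            Finset.sum_add_distrib
        _ = 2 * SI.ncard := by rw [h1, hSIcard]; ring
    rw [csat_orList]
    have hiff : ∀ n1 : ℕ,
        (CSat G (CFormula.and (.count n1 (v0 i) (Tr s (Function.update σ i none) φ))
          (SumGE (v0 i) ((List.finRange s).map fun j t =>
              PairGE (v0 i) (v0 i) (v1 i) t
                (.and (.adj (v0 i) (v1 i)) (Tr s (Function.update σ i (some j)) φ)))
            (2*(n - n1)))) b)
        ↔ (n1 ≤ SO.ncard ∧ 2*(n - n1) ≤ 2 * SI.ncard) := by
      intro n1
      have hc1 : CSat G (CFormula.count n1 (v0 i) (Tr s (Function.update σ i none) φ)) b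
          ↔ n1 ≤ SO.ncard := by
        simp only [CSat]
        rw [hSOcard]
      have hc2 : CSat G (SumGE (v0 i) ((List.finRange s).map fun j t =>
              PairGE (v0 i) (v0 i) (v1 i) t
                (.and (.adj (v0 i) (v1 i)) (Tr s (Function.update σ i (some j)) φ)))
            (2*(n - n1))) b ↔ 2*(n - n1) ≤ 2 * SI.ncard := by
        rw [csat_sumGE (List.finRange s) _ (fun j => (D j).ncard)
          (fun j _ t => csat_pairGE v0_ne_v1 _ b t), ← Fin.sum_univ_def, hsumD]
      constructor
      · rintro ⟨h1, h2⟩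
        exact ⟨hc1.mp h1, hc2.mp h2⟩
      · rintro ⟨h1, h2⟩
        exact ⟨hc1.mpr h1, hc2.mpr h2⟩
    constructor
    · intro hn
      rw [hdecomp] at hn
      refine ⟨_, List.mem_map_of_mem (List.mem_range.2
        (Nat.lt_succ_of_le (Nat.min_le_left n SO.ncard))), ?_⟩
      rw [hiff (min n SO.ncard)]
      omega
    · rintro ⟨ψ', hmem, hsat⟩
      simp only [List.mem_map, List.mem_range] at hmem
      obtain ⟨n1, hn1, rfl⟩ := hmem
      rw [hiff n1] at hsat
      rw [hdecomp]
      omega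

end Main
end CEquivSub
namespace CEquivSub

section FV

variable {m k s : ℕ}

lemma fv_topF {x : Fin m} : (topF x).freeVars = ∅ := by
  simp [topF, CFormula.freeVars]

lemma fv_botF {x : Fin m} : (botF x).freeVars = ∅ := by
  simp [botF, topF, CFormula.freeVars]

lemma fv_orF {φ ψ : CFormula m} : (orF φ ψ).freeVars = φ.freeVars ∪ ψ.freeVars := by
  simp [orF, CFormula.freeVars]

lemma fv_orList {x : Fin m} {l : List (CFormula m)} {A : Finset (Fin m)}
    (h : ∀ ψ ∈ l, ψ.freeVars ⊆ A) : (OrListF x l).freeVars ⊆ A := by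
  induction l with
  | nil => simp [OrListF, fv_botF]
  | cons ψ l ih =>
    simp only [OrListF, List.foldr] at *
    rw [fv_orF]
    exact Finset.union_subset (h ψ (by simp)) (ih (fun χ hχ => h χ (by simp [hχ])))

lemma fv_sumGE {x : Fin m} {l : List (ℕ → CFormula m)} {A : Finset (Fin m)}
    (h : ∀ F ∈ l, ∀ t, (F t).freeVars ⊆ A) : ∀ t, (SumGE x l t).freeVars ⊆ A := by
  induction l with
  | nil =>
    intro t
    simp only [SumGE]
    split <;> simp [fv_topF, fv_botF]
  | cons F l ih =>
    intro t
    simp only [SumGE]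
    refine fv_orList ?_
    intro ψ hψ
    simp only [List.mem_map, List.mem_range] at hψ
    obtain ⟨r, -, rfl⟩ := hψ
    show (CFormula.freeVars _) ⊆ A
    simp only [CFormula.freeVars]
    exact Finset.union_subset (h F (by simp) r)
      (ih (fun F' hF' => h F' (by simp [hF'])) (t - r))

lemma fv_pairGE {x p q : Fin m} {t : ℕ} {ψ : CFormula m} :
    (PairGE x p q t ψ).freeVars ⊆ (ψ.freeVars.erase q).erase p := by
  refine fv_sumGE ?_ t
  intro F hF t'
  simp only [List.mem_map, List.mem_range] at hF
  obtain ⟨r, -, rfl⟩ := hF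
  simp only [CFormula.freeVars]
  exact Finset.Subset.refl _

/-- The slots used by the variable `i` in the translation. -/
def slotset (σ : Fin k → Option (Fin s)) (i : Fin k) : Finset (Fin (8*k)) :=
  if (σ i).isSome then {v0 i, v1 i} else {v0 i}

lemma v0_mem_slotset {σ : Fin k → Option (Fin s)} {i : Fin k} : v0 i ∈ slotset σ i := by
  unfold slotset; split <;> simp

lemma v1_mem_slotset {σ : Fin k → Option (Fin s)} {i : Fin k} {j : Fin s}
    (h : σ i = some j) : v1 i ∈ slotset σ i := by
  unfold slotset; rw [h]; simp

lemma fv_tr (φ : CFormula k) (σ : Fin k → Option (Fin s)) :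
    (Tr s σ φ).freeVars ⊆ φ.freeVars.biUnion (slotset σ) := by
  induction φ generalizing σ with
  | eq i i' =>
    have hii : i ∈ ({i, i'} : Finset (Fin k)) := by simp
    have hii' : i' ∈ ({i, i'} : Finset (Fin k)) := by simp
    simp only [Tr, CFormula.freeVars]
    rcases hσ1 : σ i with _ | j <;> rcases hσ2 : σ i' with _ | j' <;>
      simp only [trEq]
    · intro y hy
      simp only [CFormula.freeVars, Finset.mem_insert, Finset.mem_singleton] at hy
      rcases hy with rfl | rfl
      · exact Finset.mem_biUnion.2 ⟨i, hii, v0_mem_slotset⟩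
      · exact Finset.mem_biUnion.2 ⟨i', hii', v0_mem_slotset⟩
    · rw [fv_botF]; simp
    · rw [fv_botF]; simp
    · rw [fv_orF]
      refine Finset.union_subset ?_ ?_ <;> split_ifs <;>
        first
        | (rw [fv_botF]; simp)
        | (intro y hy
           simp only [CFormula.freeVars, Finset.mem_union, Finset.mem_insert,
             Finset.mem_singleton] at hy
           rcases hy with (rfl | rfl) | (rfl | rfl) <;>
             first
             | exact Finset.mem_biUnion.2 ⟨i, hii, v0_mem_slotset⟩
             | exact Finset.mem_biUnion.2 ⟨i', hii', v0_mem_slotset⟩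
             | exact Finset.mem_biUnion.2 ⟨i, hii, v1_mem_slotset hσ1⟩
             | exact Finset.mem_biUnion.2 ⟨i', hii', v1_mem_slotset hσ2⟩)
  | adj i i' =>
    have hii : i ∈ ({i, i'} : Finset (Fin k)) := by simp
    have hii' : i' ∈ ({i, i'} : Finset (Fin k)) := by simp
    simp only [Tr, CFormula.freeVars]
    rcases hσ1 : σ i with _ | j <;> rcases hσ2 : σ i' with _ | j' <;>
      simp only [trAdj]
    · split_ifs
      · intro y hy
        simp only [CFormula.freeVars, Finset.mem_insert, Finset.mem_singleton] at hy
        rcases hy with rfl | rfl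
        · exact Finset.mem_biUnion.2 ⟨i, hii, v0_mem_slotset⟩
        · exact Finset.mem_biUnion.2 ⟨i', hii', v0_mem_slotset⟩
      · rw [fv_botF]; simp
    all_goals
      rw [fv_orF]
      refine Finset.union_subset ?_ ?_ <;> split_ifs <;>
        first
        | (rw [fv_botF]; simp)
        | (intro y hy
           simp only [CFormula.freeVars, Finset.mem_union, Finset.mem_insert,
             Finset.mem_singleton] at hy
           rcases hy with (rfl | rfl) | (rfl | rfl) <;>
             first
             | exact Finset.mem_biUnion.2 ⟨i, hii, v0_mem_slotset⟩
             | exact Finset.mem_biUnion.2 ⟨i', hii', v0_mem_slotset⟩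
             | exact Finset.mem_biUnion.2 ⟨i, hii, v1_mem_slotset hσ1⟩
             | exact Finset.mem_biUnion.2 ⟨i', hii', v1_mem_slotset hσ2⟩)
  | not φ ih =>
    simp only [Tr, CFormula.freeVars]
    exact ih σ
  | and φ ψ ihφ ihψ =>
    simp only [Tr, CFormula.freeVars]
    refine Finset.union_subset ((ihφ σ).trans ?_) ((ihψ σ).trans ?_) <;>
      exact Finset.biUnion_subset_biUnion_of_subset_left _ (by simp)
  | count n i φ ih =>
    simp only [Tr, CFormula.freeVars]
    refine fv_orList ?_
    intro ψ' hψ'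
    simp only [List.mem_map, List.mem_range] at hψ'
    obtain ⟨n1, -, rfl⟩ := hψ'
    show (CFormula.freeVars _) ⊆ _
    simp only [CFormula.freeVars]
    have key : ∀ (τ : Option (Fin s)) (y : Fin (8*k)),
        y ∈ (Tr s (Function.update σ i τ) φ).freeVars → y ≠ v0 i → y ≠ v1 i →
        y ∈ (φ.freeVars.erase i).biUnion (slotset σ) := by
      intro τ y hy hy0 hy1
      have := ih (Function.update σ i τ) hy
      rw [Finset.mem_biUnion] at this ⊢
      obtain ⟨i'', hi'', hmem⟩ := this
      rcases eq_or_ne i'' i with rfl | hne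
      · exfalso
        unfold slotset at hmem
        split at hmem <;> simp at hmem <;> tauto
      · refine ⟨i'', Finset.mem_erase.2 ⟨hne, hi''⟩, ?_⟩
        unfold slotset at hmem ⊢
        rwa [Function.update_of_ne hne] at hmem
    refine Finset.union_subset ?_ ?_
    · intro y hy
      rw [Finset.mem_erase] at hy
      obtain ⟨hy0, hy⟩ := hy
      by_cases hy1 : y = v1 i
      · exfalso
        subst hy1
        have := ih (Function.update σ i none) hy
        rw [Finset.mem_biUnion] at this
        obtain ⟨i'', hi'', hmem⟩ := this
        unfold slotset at hmem
        rcases eq_or_ne i'' i with rfl | hne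
        · rw [Function.update_self] at hmem
          rw [if_neg (by simp)] at hmem
          rw [Finset.mem_singleton] at hmem
          exact v1_ne_v0 hmem
        · rw [Function.update_of_ne hne] at hmem
          split at hmem
          · rw [Finset.mem_insert, Finset.mem_singleton] at hmem
            rcases hmem with hmem | hmem
            · exact v1_ne_v0 hmem
            · exact v1_ne_v1 (Ne.symm hne) hmem
          · rw [Finset.mem_singleton] at hmem
            exact v1_ne_v0 hmem
      · exact key none y hy hy0 hy1
    · refine (fv_sumGE ?_ _)
      intro F hF t
      simp only [List.mem_map] at hF
      obtain ⟨j, -, rfl⟩ := hF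
      refine (fv_pairGE.trans ?_)
      intro y hy
      rw [Finset.mem_erase, Finset.mem_erase] at hy
      obtain ⟨hy0, hy1, hy⟩ := hy
      simp only [CFormula.freeVars, Finset.mem_union] at hy
      rcases hy with hy | hy
      · exfalso
        simp only [CFormula.freeVars, Finset.mem_insert, Finset.mem_singleton] at hy
        tauto
      · exact key (some j) y hy hy0 hy1

end FV

section Congr

lemma csat_congr {V : Type} (G : SimpleGraph V) {k : ℕ} (φ : CFormula k) :
    ∀ (a a' : Fin k → V), (∀ i ∈ φ.freeVars, a i = a' i) → (CSat G φ a ↔ CSat G φ a') := by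
  induction φ with
  | eq i i' =>
    intro a a' h
    have h1 := h i (by simp [CFormula.freeVars])
    have h2 := h i' (by simp [CFormula.freeVars])
    show a i = a i' ↔ a' i = a' i'
    rw [h1, h2]
  | adj i i' =>
    intro a a' h
    have h1 := h i (by simp [CFormula.freeVars])
    have h2 := h i' (by simp [CFormula.freeVars])
    show G.Adj (a i) (a i') ↔ G.Adj (a' i) (a' i')
    rw [h1, h2]
  | not φ ih =>
    intro a a' h
    simp only [CSat]
    rw [ih a a' (fun i hi => h i hi)]
  | and φ ψ ihφ ihψ =>
    intro a a' h
    simp only [CSat]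
    rw [ihφ a a' (fun i hi => h i (by simp [CFormula.freeVars, hi])),
      ihψ a a' (fun i hi => h i (by simp [CFormula.freeVars, hi]))]
  | count n i φ ih =>
    intro a a' h
    simp only [CSat]
    have : {u | CSat G φ (Function.update a i u)} = {u | CSat G φ (Function.update a' i u)} := by
      ext u
      refine ih _ _ (fun i' hi' => ?_)
      rcases eq_or_ne i' i with rfl | hne
      · rw [Function.update_self, Function.update_self]
      · rw [Function.update_of_ne hne, Function.update_of_ne hne]
        exact h i' (by simp [CFormula.freeVars, Finset.mem_erase, hne, hi'])
    rw [this]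

end Congr
end CEquivSub
/-- Let `G` and `H` be graphs on the same vertex set with minimum degree at least `3`.
If `G ≡_{C_{8k}} H`, then `Gˢ ≡_{C_k} Hˢ` for every `s`. -/
theorem cEquiv_subdivision {V : Type} [Fintype V] [LinearOrder V]
    (G H : SimpleGraph V) (s k : ℕ) (hk : 1 ≤ k)
    (hdegG : ∀ v : V, 3 ≤ Set.ncard {w : V | G.Adj v w})
    (hdegH : ∀ v : V, 3 ≤ Set.ncard {w : V | H.Adj v w})
    (h : CEquiv G H (8 * k)) :
    CEquiv (subdivision G s) (subdivision H s) k := by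
  open CEquivSub in
  intro φ hφ
  rcases isEmpty_or_nonempty V with hV | hV
  · have hG : IsEmpty (SubdivVerts G s) :=
      ⟨fun x => match x with
        | .inl v => hV.elim v
        | .inr (e, _) => hV.elim e.1.1⟩
    have hH : IsEmpty (SubdivVerts H s) :=
      ⟨fun x => match x with
        | .inl v => hV.elim v
        | .inr (e, _) => hV.elim e.1.1⟩
    constructor <;> intro _ a
    · exact (hH.elim (a ⟨0, hk⟩))
    · exact (hG.elim (a ⟨0, hk⟩))
  · obtain ⟨v⟩ := hV
    set σ0 : Fin k → Option (Fin s) := fun _ => none with hσ0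
    have hfv : (Tr s σ0 φ).freeVars = ∅ := by
      have := fv_tr φ σ0
      rw [hφ] at this
      simpa using Finset.subset_empty.mp (by simpa using this)
    have bridge : ∀ (G' : SimpleGraph V),
        ((∀ a, CSat (subdivision G' s) φ a) ↔ (∀ b, CSat G' (Tr s σ0 φ) b)) := by
      intro G'
      constructor
      · intro hall b
        have henc : Enc G' s σ0 (fun i => Sum.inl (b (v0 i))) b := fun i => rfl
        exact (tr_correct G' φ σ0 _ b henc).mp (hall _)
      · intro hall a
        have henc : Enc G' s σ0 (fun _ => Sum.inl v) (fun _ => v) := fun i => rfl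
        have h1 : CSat (subdivision G' s) φ (fun _ => Sum.inl v) :=
          (tr_correct G' φ σ0 _ _ henc).mpr (hall _)
        refine (csat_congr _ φ a _ (fun i hi => ?_)).mpr h1
        rw [hφ] at hi
        exact absurd hi (Finset.notMem_empty i)
    rw [bridge G, bridge H]
    exact h (Tr s σ0 φ) hfv
end
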